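/- arXiv:2402.06380 — 4 statements merged into one kernel-verified Lean document; each statement's English description precedes it below -/
import Mathlib

section
/- Let (X,Y) be a centered bivariate Gaussian with positive definite covariance matrix [[σ_x², ρ_{xy}],[ρ_{xy}, σ_y²]], let (X^{(1)},Y^{(1)}),…,(X^{(n)},Y^{(n)}) be i.i.d. copies, and set ρ̂_{xy} = (1/n)∑_{i=1}^n X^{(i)}Y^{(i)}. Then for every t ∈ (0,1), Pr(|ρ̂_{xy} − ρ_{xy}| ≥ t·σ_x·σ_y) ≤ 2·exp(−n t²/38). -/
open MeasureTheory ProbabilityTheory Matrix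

/-- The centered Gaussian measure on `ι → ℝ` with covariance matrix `S`,
defined via its density with respect to Lebesgue measure. -/
noncomputable def gaussianOfCov {ι : Type*} [Fintype ι] [DecidableEq ι] (S : Matrix ι ι ℝ) :
    Measure (ι → ℝ) :=
  (volume : Measure (ι → ℝ)).withDensity fun x =>
    ENNReal.ofReal ((Real.sqrt ((2 * Real.pi) ^ (Fintype.card ι) * S.det))⁻¹ *
      Real.exp (-(x ⬝ᵥ (S⁻¹ *ᵥ x)) / 2))

/-- Kullback–Leibler divergence `∫ log (dP/dQ) dP`. -/
noncomputable def klDiv {E : Type*} [MeasurableSpace E] (P Q : Measure E) : ℝ :=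
  ∫ x, MeasureTheory.llr P Q x ∂P

/-- A positive definite covariance matrix is `T`-structured for an undirected
graph `T` if its inverse vanishes off the diagonal outside the edges of `T`. -/
def TStructured {d : ℕ} (T : SimpleGraph (Fin d)) (S : Matrix (Fin d) (Fin d) ℝ) : Prop :=
  S.PosDef ∧ ∀ j k, j ≠ k → ¬ T.Adj j k → S⁻¹ j k = 0

/-- Infimum of KL divergences from `P` to `T`-structured centered Gaussians. -/
noncomputable def treeKL {d : ℕ} (P : Measure (Fin d → ℝ)) (T : SimpleGraph (Fin d)) : ℝ :=
  sInf {r | ∃ S : Matrix (Fin d) (Fin d) ℝ, TStructured T S ∧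
    r = klDiv P (gaussianOfCov S)}

/-- Minimum over trees of `treeKL`. -/
noncomputable def bestTreeKL {d : ℕ} (P : Measure (Fin d → ℝ)) : ℝ :=
  sInf {r | ∃ T : SimpleGraph (Fin d), T.IsTree ∧ r = treeKL P T}

instance {d : ℕ} : MeasurableSpace (SimpleGraph (Fin d)) := ⊤

/-- Sample covariance matrix. -/
noncomputable def sampleCov {n d : ℕ} (x : Fin n → Fin d → ℝ) :
    Matrix (Fin d) (Fin d) ℝ :=
  fun j k => (1 / (n : ℝ)) * ∑ i, x i j * x i k

/-- `condMatrix S C x y = S x y − S_{xC} S_{CC}⁻¹ S_{Cy}`. -/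
noncomputable def condMatrix {d : ℕ} (S : Matrix (Fin d) (Fin d) ℝ)
    (C : Finset (Fin d)) : Matrix (Fin d) (Fin d) ℝ :=
  fun x y => S x y -
    ∑ a : C, ∑ b : C, S x a * ((Matrix.of fun p q : C => S p q)⁻¹ a b) * S b y

/-- Partial correlation of `j` and `k` given the variables in `C`. -/
noncomputable def pcorr {d : ℕ} (S : Matrix (Fin d) (Fin d) ℝ) (j k : Fin d)
    (C : Finset (Fin d)) : ℝ :=
  condMatrix S C j k / Real.sqrt (condMatrix S C j j * condMatrix S C k k)

/-- The skeleton of a directed graph `E` on `Fin d`. -/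
def skeleton {d : ℕ} (E : Fin d → Fin d → Prop) : SimpleGraph (Fin d) where
  Adj j k := j ≠ k ∧ (E j k ∨ E k j)
  symm := ⟨fun j k h => ⟨h.1.symm, h.2.symm⟩⟩
  loopless := ⟨fun j h => h.1 rfl⟩

/-- A polytree: a DAG whose skeleton is a tree. -/
def IsPolytree {d : ℕ} (E : Fin d → Fin d → Prop) : Prop :=
  (∀ j, ¬ E j j) ∧ (∀ j k, ¬ (E j k ∧ E k j)) ∧ (skeleton E).IsTree

/-- A directed tree: a polytree with a root with no parent and all other
nodes having exactly one parent. -/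
def IsDirectedTree {d : ℕ} (E : Fin d → Fin d → Prop) : Prop :=
  IsPolytree E ∧ ∃ r : Fin d, (∀ j, ¬ E j r) ∧ ∀ k, k ≠ r → ∃! j, E j k

/-- `N(0,Σ)` is Markov to the DAG `E` if `Σ = (I−A)⁻¹ D (I−A)⁻ᵀ` with the
support of `A` contained in the edges of `E`. -/
def MarkovTo {d : ℕ} (S : Matrix (Fin d) (Fin d) ℝ)
    (E : Fin d → Fin d → Prop) : Prop :=
  ∃ (A : Matrix (Fin d) (Fin d) ℝ) (D : Fin d → ℝ),
    (∀ k j, A k j ≠ 0 → E j k) ∧ (∀ k, 0 < D k) ∧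
    S = (1 - A)⁻¹ * Matrix.diagonal D * ((1 - A)⁻¹)ᵀ

/-- `c`-strong tree-faithfulness of `N(0,Σ)` to the polytree `E`. -/
def StrongTreeFaithful {d : ℕ} (c : ℝ) (S : Matrix (Fin d) (Fin d) ℝ)
    (E : Fin d → Fin d → Prop) : Prop :=
  (∀ j k, (skeleton E).Adj j k →
      c ≤ pcorr S j k ∅ ∧ ∀ ℓ, ℓ ≠ j → ℓ ≠ k → c ≤ pcorr S j k {ℓ}) ∧
  (∀ j ℓ k, E j ℓ → E k ℓ → j ≠ k → ¬ (skeleton E).Adj j k →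
      c ≤ pcorr S j k {ℓ})

section Aux
open Real

lemma quadform_eq (a b ρ : ℝ) (hd : a*b - ρ^2 ≠ 0) (v : Fin 2 → ℝ) :
    v ⬝ᵥ ((!![a,ρ;ρ,b] : Matrix (Fin 2) (Fin 2) ℝ)⁻¹ *ᵥ v)
      = (b * v 0 ^ 2 - 2*ρ * v 0 * v 1 + a * v 1 ^ 2) / (a*b - ρ^2) := by
  have hd' : b*a - ρ^2 ≠ 0 := by rwa [mul_comm]
  rw [Matrix.inv_def, Matrix.adjugate_fin_two, Matrix.det_fin_two_of, Ring.inverse_eq_inv']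
  simp [Matrix.mulVec, dotProduct, Fin.sum_univ_two, Matrix.vecHead, Matrix.vecTail]
  ring

lemma lint_gauss (c m : ℝ) (hc : 0 < c) :
    ∫⁻ x : ℝ, ENNReal.ofReal (Real.exp (-c * (x - m) ^ 2)) = ENNReal.ofReal (Real.sqrt (π / c)) := by
  have hint : Integrable (fun x : ℝ => Real.exp (-c * (x - m) ^ 2)) := by
    have := (integrable_exp_neg_mul_sq hc).comp_sub_right m
    simpa using this
  rw [← ofReal_integral_eq_lintegral_ofReal hint (Filter.Eventually.of_forall fun x => (Real.exp_pos _).le)]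
  congr 1
  have : ∫ x : ℝ, Real.exp (-c * (x - m) ^ 2) = ∫ x : ℝ, Real.exp (-c * x ^ 2) :=
    integral_sub_right_eq_self (fun x => Real.exp (-c * x ^ 2)) m
  rw [this, integral_gaussian]

lemma mgf2 (a b ρ ℓ : ℝ) (ha : 0 < a) (hb : 0 < b) (hd : 0 < a*b - ρ^2)
    (hD : 0 < (1 - ℓ*ρ)^2 - ℓ^2*(a*b)) :
    ∫⁻ v : Fin 2 → ℝ, ENNReal.ofReal (Real.exp (ℓ * (v 0 * v 1)))
        ∂(gaussianOfCov (!![a, ρ; ρ, b] : Matrix (Fin 2) (Fin 2) ℝ))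
      = ENNReal.ofReal (1 / Real.sqrt ((1 - ℓ*ρ)^2 - ℓ^2*(a*b))) := by
  set d : ℝ := a*b - ρ^2 with hd_def
  set D : ℝ := (1 - ℓ*ρ)^2 - ℓ^2*(a*b) with hD_def
  set m : ℝ := (ρ + ℓ*d)/b with hm_def
  set c₀ : ℝ := (Real.sqrt ((2 * π) ^ 2 * d))⁻¹ with hc₀_def
  have hπ := Real.pi_pos
  have hc₀pos : 0 < c₀ := by
    rw [hc₀_def]
    apply inv_pos.2
    apply Real.sqrt_pos.2
    positivity
  have hdet : (!![a, ρ; ρ, b] : Matrix (Fin 2) (Fin 2) ℝ).det = d := by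
    rw [Matrix.det_fin_two_of]; rw [hd_def]; ring
  have hcard : Fintype.card (Fin 2) = 2 := by simp
  have hsplit : ∀ v : Fin 2 → ℝ,
      c₀ * Real.exp (-(v ⬝ᵥ ((!![a, ρ; ρ, b] : Matrix (Fin 2) (Fin 2) ℝ)⁻¹ *ᵥ v)) / 2)
        * Real.exp (ℓ * (v 0 * v 1))
      = c₀ * (Real.exp (-(b/(2*d)) * (v 0 - m * v 1) ^ 2) * Real.exp (-(D/(2*b)) * (v 1) ^ 2)) := by
    intro v
    rw [quadform_eq a b ρ hd.ne' v, ← hd_def, mul_assoc, ← Real.exp_add, ← Real.exp_add]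
    congr 2
    rw [hm_def, hD_def]
    field_simp
    ring
  rw [gaussianOfCov]
  rw [lintegral_withDensity_eq_lintegral_mul]
  rotate_left
  · apply Measurable.ennreal_ofReal
    apply Measurable.const_mul
    apply Real.measurable_exp.comp
    apply Measurable.div_const
    apply Measurable.neg
    have : Measurable fun v : Fin 2 → ℝ => v ⬝ᵥ ((!![a, ρ; ρ, b] : Matrix (Fin 2) (Fin 2) ℝ)⁻¹ *ᵥ v) := by
      simp only [dotProduct, Matrix.mulVec, Fin.sum_univ_two]
      fun_prop
    exact this
  · fun_prop
  have step1 : ∀ v : Fin 2 → ℝ,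
      (ENNReal.ofReal ((Real.sqrt ((2 * π) ^ (Fintype.card (Fin 2)) * (!![a, ρ; ρ, b] : Matrix (Fin 2) (Fin 2) ℝ).det))⁻¹ *
        Real.exp (-(v ⬝ᵥ ((!![a, ρ; ρ, b] : Matrix (Fin 2) (Fin 2) ℝ)⁻¹ *ᵥ v)) / 2))
        * ENNReal.ofReal (Real.exp (ℓ * (v 0 * v 1))))
      = ENNReal.ofReal (c₀ * (Real.exp (-(b/(2*d)) * (v 0 - m * v 1) ^ 2) * Real.exp (-(D/(2*b)) * (v 1) ^ 2))) := by
    intro v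
    rw [hcard, hdet, ← ENNReal.ofReal_mul (by positivity), ← hc₀_def, hsplit v]
  simp only [Pi.mul_apply, step1]
  have hgm : Measurable fun p : ℝ × ℝ =>
      ENNReal.ofReal (c₀ * (Real.exp (-(b/(2*d)) * (p.1 - m * p.2) ^ 2) * Real.exp (-(D/(2*b)) * p.2 ^ 2))) := by
    fun_prop
  have hmp := measurePreserving_piFinTwo (fun _ : Fin 2 => (volume : Measure ℝ))
  have hvol : (volume : Measure (Fin 2 → ℝ)) = Measure.pi fun _ => (volume : Measure ℝ) := volume_pi
  rw [hvol]
  have := hmp.lintegral_comp hgm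
  have hcomp : ∀ v : Fin 2 → ℝ,
      ENNReal.ofReal (c₀ * (Real.exp (-(b/(2*d)) * (v 0 - m * v 1) ^ 2) * Real.exp (-(D/(2*b)) * (v 1) ^ 2)))
      = (fun p : ℝ × ℝ => ENNReal.ofReal (c₀ * (Real.exp (-(b/(2*d)) * (p.1 - m * p.2) ^ 2) * Real.exp (-(D/(2*b)) * p.2 ^ 2))))
          (MeasurableEquiv.piFinTwo (fun _ => ℝ) v) := fun v => rfl
  simp only [hcomp]
  rw [this]
  rw [lintegral_prod_symm' _ hgm]
  have hk1 : 0 < b/(2*d) := by positivity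
  have hk2 : 0 < D/(2*b) := by positivity
  have inner : ∀ y : ℝ,
      (∫⁻ x : ℝ, ENNReal.ofReal (c₀ * (Real.exp (-(b/(2*d)) * (x - m * y) ^ 2) * Real.exp (-(D/(2*b)) * y ^ 2))))
      = ENNReal.ofReal (c₀ * Real.sqrt (π / (b/(2*d)))) * ENNReal.ofReal (Real.exp (-(D/(2*b)) * y ^ 2)) := by
    intro y
    have : ∀ x : ℝ, ENNReal.ofReal (c₀ * (Real.exp (-(b/(2*d)) * (x - m * y) ^ 2) * Real.exp (-(D/(2*b)) * y ^ 2)))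
        = ENNReal.ofReal (c₀ * Real.exp (-(D/(2*b)) * y ^ 2)) * ENNReal.ofReal (Real.exp (-(b/(2*d)) * (x - m * y) ^ 2)) := by
      intro x
      rw [← ENNReal.ofReal_mul (by positivity)]
      ring_nf
    simp only [this]
    rw [lintegral_const_mul _ (by fun_prop), lint_gauss _ (m*y) hk1,
        ← ENNReal.ofReal_mul (by positivity), ← ENNReal.ofReal_mul (by positivity)]
    ring_nf
  simp only [inner]
  rw [lintegral_const_mul _ (by fun_prop)]
  have houter : ∫⁻ y : ℝ, ENNReal.ofReal (Real.exp (-(D/(2*b)) * y ^ 2)) = ENNReal.ofReal (Real.sqrt (π / (D/(2*b)))) := by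
    have := lint_gauss (D/(2*b)) 0 hk2
    simpa using this
  rw [houter, ← ENNReal.ofReal_mul (by positivity)]
  congr 1
  rw [mul_assoc, ← Real.sqrt_mul (by positivity)]
  have harg : π / (b/(2*d)) * (π / (D/(2*b))) = ((2*π)^2*d) / D := by
    field_simp
  rw [harg, Real.sqrt_div (by positivity), hc₀_def]
  have hK : Real.sqrt ((2*π)^2*d) ≠ 0 := by positivity
  have hDK : Real.sqrt D ≠ 0 := by
    apply ne_of_gt; exact Real.sqrt_pos.2 hD
  field_simp

lemma exp_quad (u : ℝ) (h1 : -(1/5 : ℝ) ≤ u) (h2 : u ≤ 1/5) :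
    Real.exp (-u - u ^ 2) ≤ 1 - u := by
  have hu1 : (0:ℝ) < 1 - u := by linarith
  have key : 1 ≤ (1 - u) * Real.exp (u + u ^ 2) := by
    rcases le_or_gt u 0 with hu | hu
    · have h := Real.add_one_le_exp (u + u ^ 2)
      nlinarith [Real.exp_pos (u + u^2)]
    · have h2exp : (1 + (u + u^2)/2) ^ 2 ≤ Real.exp (u + u ^ 2) := by
        have hh : (1:ℝ) + (u + u^2)/2 ≤ Real.exp ((u + u^2)/2) := by
          have := Real.add_one_le_exp ((u + u^2)/2); linarith
        have hpos : (0:ℝ) ≤ 1 + (u + u^2)/2 := by nlinarith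
        calc (1 + (u + u^2)/2) ^ 2 ≤ Real.exp ((u + u^2)/2) ^ 2 :=
              pow_le_pow_left₀ hpos hh 2
          _ = Real.exp (u + u ^ 2) := by
              rw [sq, ← Real.exp_add]; ring_nf
      have hu2 : u^2 ≤ u/5 := by nlinarith
      have hu3 : u^3 ≤ u/25 := by nlinarith
      have hpoly : 0 ≤ u^2 * (1 - 3*u - u^2 - u^3) := by
        apply mul_nonneg (sq_nonneg u); linarith
      nlinarith
  have h3 : Real.exp (-u - u^2) * Real.exp (u + u^2) = 1 := by
    rw [← Real.exp_add]; norm_num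
  nlinarith [Real.exp_pos (-u - u^2), Real.exp_pos (u + u^2)]

lemma key_ineq (s ρ t : ℝ) (hs : 0 < s) (hρ : ρ^2 < s^2) (ht : 0 < t) (ht1 : t ≤ 1) :
    0 < (1 - (t/(10*s))*ρ)^2 - (t/(10*s))^2*s^2 ∧
    Real.exp (-((t/(10*s))*(ρ + t*s))) / Real.sqrt ((1 - (t/(10*s))*ρ)^2 - (t/(10*s))^2*s^2)
      ≤ Real.exp (-t^2/38) := by
  set lam : ℝ := t/(10*s) with hlam_def
  have hlam : 0 < lam := by positivity
  clear_value lam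
  have hρlt : ρ < s := by nlinarith
  have hρgt : -s < ρ := by nlinarith
  set u₁ : ℝ := lam*(ρ+s) with hu1_def
  set u₂ : ℝ := lam*(ρ-s) with hu2_def
  clear_value u₁ u₂
  have hls : lam * s = t/10 := by rw [hlam_def]; field_simp
  have hu1a : 0 ≤ u₁ := by rw [hu1_def]; nlinarith
  have hu1b : u₁ ≤ 1/5 := by
    have : u₁ ≤ 2*(lam*s) := by rw [hu1_def]; nlinarith
    rw [hls] at this; linarith
  have hu2a : u₂ ≤ 0 := by rw [hu2_def]; nlinarith
  have hu2b : -(1/5 : ℝ) ≤ u₂ := by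
    have : -(2*(lam*s)) ≤ u₂ := by rw [hu2_def]; nlinarith
    rw [hls] at this; linarith
  have hfact : (1 - lam*ρ)^2 - lam^2*s^2 = (1-u₁)*(1-u₂) := by
    rw [hu1_def, hu2_def]; ring
  have hDpos : 0 < (1 - lam*ρ)^2 - lam^2*s^2 := by
    rw [hfact]; apply mul_pos <;> linarith
  refine ⟨hDpos, ?_⟩
  rw [div_le_iff₀ (Real.sqrt_pos.2 hDpos)]
  have hA : (0:ℝ) ≤ Real.exp (-(lam*(ρ + t*s))) := (Real.exp_pos _).le
  have hsq : Real.exp (-(lam*(ρ + t*s))) ^ 2 ≤ Real.exp (-t^2/38) ^ 2 * ((1 - lam*ρ)^2 - lam^2*s^2) := by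
    rw [hfact]
    have e1 : Real.exp (-u₁ - u₁^2) ≤ 1 - u₁ := exp_quad u₁ (by linarith) hu1b
    have e2 : Real.exp (-u₂ - u₂^2) ≤ 1 - u₂ := exp_quad u₂ hu2b (by linarith)
    have eprod : Real.exp ((-u₁ - u₁^2) + (-u₂ - u₂^2)) ≤ (1-u₁)*(1-u₂) := by
      rw [Real.exp_add]
      exact mul_le_mul e1 e2 (Real.exp_pos _).le (by linarith)
    have hts : lam * (t*s) = t^2/10 := by
      rw [hlam_def]; field_simp
    have husum : u₁ + u₂ = 2*(lam*ρ) := by rw [hu1_def, hu2_def]; ring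
    have hl2 : lam^2*s^2 = t^2/100 := by
      calc lam^2*s^2 = (lam*s)^2 := by ring
        _ = (t/10)^2 := by rw [hls]
        _ = t^2/100 := by ring
    have husq : u₁^2 + u₂^2 ≤ t^2/25 := by
      have expand : u₁^2 + u₂^2 = 2*(lam^2*ρ^2) + 2*(lam^2*s^2) := by
        rw [hu1_def, hu2_def]; ring
      have hle : lam^2*ρ^2 ≤ lam^2*s^2 := mul_le_mul_of_nonneg_left hρ.le (sq_nonneg lam)
      rw [expand]; rw [hl2] at hle ⊢; linarith
    have hexp2 : Real.exp (-(lam*(ρ + t*s))) ^ 2 = Real.exp (-(u₁+u₂) - t^2/5) := by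
      rw [sq, ← Real.exp_add]
      congr 1
      linarith [husum, hts]
    have hexp3 : Real.exp (-t^2/38) ^ 2 = Real.exp (-t^2/19) := by
      rw [sq, ← Real.exp_add]; ring_nf
    rw [hexp2, hexp3]
    calc Real.exp (-(u₁+u₂) - t^2/5)
        ≤ Real.exp (-t^2/19) * Real.exp ((-u₁ - u₁^2) + (-u₂ - u₂^2)) := by
          rw [← Real.exp_add]
          apply Real.exp_le_exp.2
          nlinarith [sq_nonneg t]
      _ ≤ Real.exp (-t^2/19) * ((1-u₁)*(1-u₂)) :=
          mul_le_mul_of_nonneg_left eprod (Real.exp_pos _).le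
  calc Real.exp (-(lam*(ρ + t*s)))
      = Real.sqrt (Real.exp (-(lam*(ρ + t*s))) ^ 2) := (Real.sqrt_sq hA).symm
    _ ≤ Real.sqrt (Real.exp (-t^2/38) ^ 2 * ((1 - lam*ρ)^2 - lam^2*s^2)) := Real.sqrt_le_sqrt hsq
    _ = Real.exp (-t^2/38) * Real.sqrt ((1 - lam*ρ)^2 - lam^2*s^2) := by
        rw [Real.sqrt_mul (sq_nonneg _), Real.sqrt_sq (Real.exp_pos _).le]

lemma lintegral_pi_pow {E : Type*} [MeasurableSpace E] (μ : Measure E) [SigmaFinite μ]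
    (f : E → ENNReal) (hf : Measurable f) (n : ℕ) :
    ∫⁻ x : Fin n → E, ∏ i, f (x i) ∂(Measure.pi fun _ => μ) = (∫⁻ z, f z ∂μ) ^ n := by
  induction n with
  | zero => simp [Measure.pi_univ]
  | succ n ih =>
    have hmeas : Measurable fun x : Fin (n+1) → E => ∏ i, f (x i) :=
      Finset.measurable_prod _ fun i _ => hf.comp (measurable_pi_apply i)
    rw [← ((measurePreserving_piFinSuccAbove (fun _ : Fin (n+1) => μ) 0).symm).lintegral_comp hmeas]
    have hpt : ∀ a : E × (Fin n → E),
        ∏ i : Fin (n+1), f ((MeasurableEquiv.piFinSuccAbove (fun _ => E) 0).symm a i)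
          = f a.1 * ∏ i : Fin n, f (a.2 i) := by
      intro a
      simp only [MeasurableEquiv.piFinSuccAbove_symm_apply, Fin.insertNthEquiv,
        Equiv.coe_fn_mk, Fin.insertNth_zero]
      rw [Fin.prod_univ_succ]
      simp [Fin.zero_succAbove]
    simp only [hpt]
    have hg : Measurable fun z : Fin n → E => ∏ i, f (z i) :=
      Finset.measurable_prod _ fun i _ => hf.comp (measurable_pi_apply i)
    rw [lintegral_prod_mul (f := f) (g := fun z : Fin n → E => ∏ i, f (z i))
      hf.aemeasurable hg.aemeasurable, ih]
    rw [pow_succ, mul_comm]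

lemma chernoff {α : Type*} [MeasurableSpace α] (ν : Measure α) (g : α → ℝ)
    (hg : Measurable g) (lam c : ℝ) (hlam : 0 < lam) :
    ν {x | c ≤ g x} ≤ ENNReal.ofReal (Real.exp (-(lam * c)))
      * ∫⁻ x, ENNReal.ofReal (Real.exp (lam * g x)) ∂ν := by
  have hε0 : ENNReal.ofReal (Real.exp (lam * c)) ≠ 0 := by
    simp [ENNReal.ofReal_eq_zero, not_le, Real.exp_pos]
  have hεt : ENNReal.ofReal (Real.exp (lam * c)) ≠ ⊤ := ENNReal.ofReal_ne_top
  have hsub : {x | c ≤ g x} ⊆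
      {x | ENNReal.ofReal (Real.exp (lam * c)) ≤ ENNReal.ofReal (Real.exp (lam * g x))} := by
    intro x hx
    simp only [Set.mem_setOf_eq] at *
    exact ENNReal.ofReal_le_ofReal (Real.exp_le_exp.2 (by nlinarith))
  have h1 := mul_meas_ge_le_lintegral₀
    (f := fun x => ENNReal.ofReal (Real.exp (lam * g x)))
    (by fun_prop) (ENNReal.ofReal (Real.exp (lam * c))) (μ := ν)
  have h2 : ENNReal.ofReal (Real.exp (lam * c)) * ν {x | c ≤ g x}
      ≤ ∫⁻ x, ENNReal.ofReal (Real.exp (lam * g x)) ∂ν :=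
    le_trans (mul_le_mul_right (measure_mono hsub) _) h1
  have hinv : ENNReal.ofReal (Real.exp (-(lam * c)))
      = (ENNReal.ofReal (Real.exp (lam * c)))⁻¹ := by
    rw [← ENNReal.ofReal_inv_of_pos (Real.exp_pos _), ← Real.exp_neg]
  rw [hinv]
  rw [mul_comm] at h2
  rw [← ENNReal.le_div_iff_mul_le (Or.inl hε0) (Or.inl hεt)] at h2
  rwa [ENNReal.div_eq_inv_mul] at h2

end Aux

/-- Covariance concentration: for i.i.d. samples from a centered bivariate
Gaussian with covariance `ρ_{xy}` and variances `σ_x², σ_y²`, the empirical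
covariance satisfies `Pr(|ρ̂ − ρ| ≥ t σ_x σ_y) ≤ 2 exp(−nt²/38)`. -/
theorem stmt_7 (σx σy ρ : ℝ) (hσx : 0 < σx) (hσy : 0 < σy)
    (hpd : (!![σx ^ 2, ρ; ρ, σy ^ 2] : Matrix (Fin 2) (Fin 2) ℝ).PosDef)
    (n : ℕ) (t : ℝ) (ht : t ∈ Set.Ioo (0 : ℝ) 1) :
    (Measure.pi fun _ : Fin n =>
        gaussianOfCov (!![σx ^ 2, ρ; ρ, σy ^ 2] : Matrix (Fin 2) (Fin 2) ℝ))
      {x | t * σx * σy ≤ |(1 / (n : ℝ)) * (∑ i, x i 0 * x i 1) - ρ|} ≤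
      ENNReal.ofReal (2 * Real.exp (-(n : ℝ) * t ^ 2 / 38)) := by
  obtain ⟨ht0, ht1⟩ := ht
  set μ : Measure (Fin 2 → ℝ) :=
    gaussianOfCov (!![σx ^ 2, ρ; ρ, σy ^ 2] : Matrix (Fin 2) (Fin 2) ℝ) with hμ_def
  have hd : 0 < σx^2*σy^2 - ρ^2 := by
    have h := hpd.det_pos
    rw [Matrix.det_fin_two_of] at h
    nlinarith
  have hx2 : 0 < σx^2 := by positivity
  have hy2 : 0 < σy^2 := by positivity
  have hμ1 : μ Set.univ = 1 := by
    have h0 := mgf2 (σx^2) (σy^2) ρ 0 hx2 hy2 hd (by norm_num)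
    simp only [zero_mul, Real.exp_zero, ENNReal.ofReal_one, lintegral_one] at h0
    rw [hμ_def, h0]
    norm_num
  haveI : IsProbabilityMeasure μ := ⟨hμ1⟩
  rcases Nat.eq_zero_or_pos n with hn | hn
  · subst hn
    calc (Measure.pi fun _ : Fin 0 => μ) {x | t * σx * σy ≤ |(1 / ((0:ℕ) : ℝ)) * (∑ i, x i 0 * x i 1) - ρ|}
        ≤ (Measure.pi fun _ : Fin 0 => μ) Set.univ := measure_mono (Set.subset_univ _)
      _ = 1 := by rw [Measure.pi_univ]; simp
      _ ≤ ENNReal.ofReal (2 * Real.exp (-((0:ℕ) : ℝ) * t ^ 2 / 38)) := by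
          rw [ENNReal.one_le_ofReal]
          norm_num
  -- main case
  have hs : 0 < σx*σy := mul_pos hσx hσy
  have hab : σx^2*σy^2 = (σx*σy)^2 := by ring
  have hρ2 : ρ^2 < (σx*σy)^2 := by nlinarith
  obtain ⟨hD1, hkey1⟩ := key_ineq (σx*σy) ρ t hs hρ2 ht0 ht1.le
  obtain ⟨hD2, hkey2⟩ := key_ineq (σx*σy) (-ρ) t hs (by nlinarith) ht0 ht1.le
  set lam : ℝ := t/(10*(σx*σy)) with hlam_def
  have hlam : 0 < lam := by rw [hlam_def]; positivity
  have hnR : (0:ℝ) < n := Nat.cast_pos.2 hn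
  -- measurability
  have hfmeas1 : Measurable (fun v : Fin 2 → ℝ => ENNReal.ofReal (Real.exp (lam * (v 0 * v 1)))) := by
    fun_prop
  have hfmeas2 : Measurable (fun v : Fin 2 → ℝ => ENNReal.ofReal (Real.exp ((-lam) * (v 0 * v 1)))) := by
    fun_prop
  have hg1 : Measurable (fun x : Fin n → (Fin 2 → ℝ) => ∑ i, x i 0 * x i 1) := by
    apply Finset.measurable_sum
    intro i _
    fun_prop
  have hg2 : Measurable (fun x : Fin n → (Fin 2 → ℝ) => ∑ i, -(x i 0 * x i 1)) := by
    apply Finset.measurable_sum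
    intro i _
    fun_prop
  -- MGF values
  have hDval1 : 0 < (1 - lam*ρ)^2 - lam^2*(σx^2*σy^2) := by rw [hab]; exact hD1
  have hI1 := mgf2 (σx^2) (σy^2) ρ lam hx2 hy2 hd hDval1
  have hDval2 : 0 < (1 - (-lam)*ρ)^2 - (-lam)^2*(σx^2*σy^2) := by
    have heq : (1 - (-lam)*ρ)^2 - (-lam)^2*(σx^2*σy^2) = (1 - lam*(-ρ))^2 - lam^2*(σx*σy)^2 := by
      rw [hab]; ring
    rw [heq]; exact hD2
  have hI2 := mgf2 (σx^2) (σy^2) ρ (-lam) hx2 hy2 hd hDval2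
  -- upper tail
  have tb1 : (Measure.pi fun _ : Fin n => μ) {x | (n:ℝ)*(ρ + t*(σx*σy)) ≤ ∑ i, x i 0 * x i 1}
      ≤ ENNReal.ofReal (Real.exp (-(n:ℝ) * t^2 / 38)) := by
    refine le_trans (chernoff _ _ hg1 lam ((n:ℝ)*(ρ + t*(σx*σy))) hlam) ?_
    have hint1 : ∫⁻ x : Fin n → Fin 2 → ℝ, ENNReal.ofReal (Real.exp (lam * ∑ i, x i 0 * x i 1))
        ∂(Measure.pi fun _ => μ)
        = ENNReal.ofReal (1 / Real.sqrt ((1 - lam*ρ)^2 - lam^2*(σx^2*σy^2))) ^ n := by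
      have hpt : ∀ x : Fin n → Fin 2 → ℝ, ENNReal.ofReal (Real.exp (lam * ∑ i, x i 0 * x i 1))
          = ∏ i, (fun v : Fin 2 → ℝ => ENNReal.ofReal (Real.exp (lam * (v 0 * v 1)))) (x i) := by
        intro x
        rw [Finset.mul_sum, Real.exp_sum, ENNReal.ofReal_prod_of_nonneg
          (fun i _ => (Real.exp_pos _).le)]
      simp only [hpt]
      rw [lintegral_pi_pow μ _ hfmeas1 n, hI1]
    rw [hint1]
    have h1 : Real.exp (-(lam * ((n:ℝ)*(ρ + t*(σx*σy))))) = Real.exp (-(lam * (ρ + t*(σx*σy)))) ^ n := by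
      rw [← Real.exp_nat_mul]; congr 1; ring
    rw [h1, ENNReal.ofReal_pow (Real.exp_pos _).le, ← mul_pow,
      ← ENNReal.ofReal_mul (Real.exp_pos _).le, ← ENNReal.ofReal_pow (by positivity)]
    apply ENNReal.ofReal_le_ofReal
    have hb : Real.exp (-(lam * (ρ + t*(σx*σy)))) * (1 / Real.sqrt ((1 - lam*ρ)^2 - lam^2*(σx^2*σy^2)))
        ≤ Real.exp (-t^2/38) := by
      rw [mul_one_div, hab]
      exact hkey1
    calc (Real.exp (-(lam * (ρ + t*(σx*σy)))) * (1 / Real.sqrt ((1 - lam*ρ)^2 - lam^2*(σx^2*σy^2)))) ^ n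
        ≤ Real.exp (-t^2/38) ^ n := pow_le_pow_left₀ (by positivity) hb n
      _ = Real.exp (-(n:ℝ) * t^2 / 38) := by rw [← Real.exp_nat_mul]; congr 1; ring
  -- lower tail
  have tb2 : (Measure.pi fun _ : Fin n => μ) {x | (n:ℝ)*(t*(σx*σy) - ρ) ≤ ∑ i, -(x i 0 * x i 1)}
      ≤ ENNReal.ofReal (Real.exp (-(n:ℝ) * t^2 / 38)) := by
    refine le_trans (chernoff _ _ hg2 lam ((n:ℝ)*(t*(σx*σy) - ρ)) hlam) ?_
    have hint2 : ∫⁻ x : Fin n → Fin 2 → ℝ, ENNReal.ofReal (Real.exp (lam * ∑ i, -(x i 0 * x i 1)))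
        ∂(Measure.pi fun _ => μ)
        = ENNReal.ofReal (1 / Real.sqrt ((1 - (-lam)*ρ)^2 - (-lam)^2*(σx^2*σy^2))) ^ n := by
      have hpt : ∀ x : Fin n → Fin 2 → ℝ, ENNReal.ofReal (Real.exp (lam * ∑ i, -(x i 0 * x i 1)))
          = ∏ i, (fun v : Fin 2 → ℝ => ENNReal.ofReal (Real.exp ((-lam) * (v 0 * v 1)))) (x i) := by
        intro x
        have : lam * ∑ i, -(x i 0 * x i 1) = ∑ i, (-lam) * (x i 0 * x i 1) := by
          rw [Finset.mul_sum]
          exact Finset.sum_congr rfl fun i _ => by ring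
        rw [this, Real.exp_sum, ENNReal.ofReal_prod_of_nonneg
          (fun i _ => (Real.exp_pos _).le)]
      simp only [hpt]
      rw [lintegral_pi_pow μ _ hfmeas2 n, hI2]
    rw [hint2]
    have h1 : Real.exp (-(lam * ((n:ℝ)*(t*(σx*σy) - ρ)))) = Real.exp (-(lam * (-ρ + t*(σx*σy)))) ^ n := by
      rw [← Real.exp_nat_mul]; congr 1; ring
    rw [h1, ENNReal.ofReal_pow (Real.exp_pos _).le, ← mul_pow,
      ← ENNReal.ofReal_mul (Real.exp_pos _).le, ← ENNReal.ofReal_pow (by positivity)]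
    apply ENNReal.ofReal_le_ofReal
    have hb : Real.exp (-(lam * (-ρ + t*(σx*σy)))) * (1 / Real.sqrt ((1 - (-lam)*ρ)^2 - (-lam)^2*(σx^2*σy^2)))
        ≤ Real.exp (-t^2/38) := by
      have heq : (1 - (-lam)*ρ)^2 - (-lam)^2*(σx^2*σy^2) = (1 - lam*(-ρ))^2 - lam^2*(σx*σy)^2 := by
        rw [hab]; ring
      rw [mul_one_div, heq]
      exact hkey2
    calc (Real.exp (-(lam * (-ρ + t*(σx*σy)))) * (1 / Real.sqrt ((1 - (-lam)*ρ)^2 - (-lam)^2*(σx^2*σy^2)))) ^ n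
        ≤ Real.exp (-t^2/38) ^ n := pow_le_pow_left₀ (by positivity) hb n
      _ = Real.exp (-(n:ℝ) * t^2 / 38) := by rw [← Real.exp_nat_mul]; congr 1; ring
  -- event inclusion
  have hsub : {x : Fin n → Fin 2 → ℝ | t * σx * σy ≤ |(1 / (n : ℝ)) * (∑ i, x i 0 * x i 1) - ρ|}
      ⊆ {x : Fin n → Fin 2 → ℝ | (n:ℝ)*(ρ + t*(σx*σy)) ≤ ∑ i, x i 0 * x i 1}
        ∪ {x : Fin n → Fin 2 → ℝ | (n:ℝ)*(t*(σx*σy) - ρ) ≤ ∑ i, -(x i 0 * x i 1)} := by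
    intro x hx
    simp only [Set.mem_setOf_eq, Set.mem_union] at *
    have hassoc : t * σx * σy = t * (σx*σy) := mul_assoc t σx σy
    set Sv : ℝ := ∑ i, x i 0 * x i 1 with hSv_def
    have h4 : (n:ℝ) * ((1/(n:ℝ)) * Sv) = Sv := by field_simp
    rcases le_abs.1 hx with h | h
    · left
      have h2 : ρ + t*(σx*σy) ≤ (1/(n:ℝ)) * Sv := by linarith
      have h3 := mul_le_mul_of_nonneg_left h2 hnR.le
      rw [h4] at h3
      exact h3
    · right
      have hsumneg : ∑ i, -(x i 0 * x i 1) = -Sv := by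
        rw [hSv_def, ← Finset.sum_neg_distrib]
      rw [hsumneg]
      have h2 : t*(σx*σy) - ρ ≤ -((1/(n:ℝ)) * Sv) := by linarith
      have h3 := mul_le_mul_of_nonneg_left h2 hnR.le
      rw [mul_neg, h4] at h3
      exact h3
  refine le_trans (measure_mono hsub) (le_trans (measure_union_le _ _) ?_)
  refine le_trans (add_le_add tb1 tb2) ?_
  rw [← ENNReal.ofReal_add (Real.exp_pos _).le (Real.exp_pos _).le]
  apply ENNReal.ofReal_le_ofReal
  rw [two_mul]
end

section
/- Let (X,Y) be a centered bivariate Gaussian with Var(X) = Var(Y) = 1 and Cov(X,Y) = r where |r| ≤ 1, let (X^{(1)},Y^{(1)}),…,(X^{(n)},Y^{(n)}) be i.i.d. copies, and define σ̂_X² = (1/n)∑_i (X^{(i)})², σ̂_Y² = (1/n)∑_i (Y^{(i)})², σ̂_{XY} = (1/n)∑_i X^{(i)}Y^{(i)}. For every ζ ∈ (0,1), if n ≥ 2048·log 7/ζ², then Pr(|σ̂_X² − 1| ≥ ζ) ≤ exp(−nζ²/16), Pr(|σ̂_Y² − 1| ≥ ζ) ≤ exp(−nζ²/16), and Pr(|σ̂_{XY}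 − r| ≥ ζ) ≤ exp(−nζ²/2048). -/
open MeasureTheory ProbabilityTheory Real

-- Piece 1
lemma G1 (α c d : ℝ) (hα : 0 < α) :
    ∫⁻ u : ℝ, ENNReal.ofReal (rexp (-α * (u - c) ^ 2 + d)) =
      ENNReal.ofReal (Real.sqrt (π / α) * rexp d) := by
  have hint : Integrable (fun u : ℝ => rexp (-α * (u - c) ^ 2 + d)) := by
    simp_rw [exp_add]
    exact ((integrable_exp_neg_mul_sq hα).comp_sub_right c).mul_const _
  rw [← ofReal_integral_eq_lintegral_ofReal hint (Filter.Eventually.of_forall fun u => (exp_pos _).le)]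
  congr 1
  simp_rw [exp_add]
  rw [integral_mul_const]
  have : ∫ u : ℝ, rexp (-α * (u - c) ^ 2) = ∫ u : ℝ, rexp (-α * u ^ 2) :=
    integral_sub_right_eq_self (fun u => rexp (-α * u ^ 2)) c
  rw [this, integral_gaussian]

-- Piece 2: 1-d mgf of quadratic under standard gaussian
lemma G2 (q l m : ℝ) (hq : q < 1/2) :
    ∫⁻ u : ℝ, ENNReal.ofReal (rexp (q * u ^ 2 + l * u + m)) ∂(gaussianReal 0 1) =
      ENNReal.ofReal ((Real.sqrt (1 - 2*q))⁻¹ * rexp (l ^ 2 / (2*(1 - 2*q)) + m)) := by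
  set α := 1/2 - q with hαdef
  have hα : 0 < α := by simp [hαdef]; linarith
  have hmeas : Measurable fun u : ℝ => ENNReal.ofReal (rexp (q * u ^ 2 + l * u + m)) := by
    fun_prop
  rw [gaussianReal_of_var_ne_zero _ (by norm_num),
    lintegral_withDensity_eq_lintegral_mul _ (measurable_gaussianPDF _ _) hmeas]
  have hpdf : ∀ u : ℝ, (gaussianPDF 0 1 * fun u => ENNReal.ofReal (rexp (q * u ^ 2 + l * u + m))) u
      = ENNReal.ofReal ((Real.sqrt (2*π))⁻¹ * rexp (-α * (u - l/(2*α)) ^ 2 + (l^2/(4*α) + m))) := by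
    intro u
    simp only [Pi.mul_apply, gaussianPDF_def, gaussianPDFReal]
    rw [← ENNReal.ofReal_mul (by positivity)]
    congr 1
    push_cast
    rw [mul_assoc, ← exp_add]
    congr 2
    · norm_num
    · field_simp
      ring
  simp_rw [hpdf, ENNReal.ofReal_mul (inv_nonneg.mpr (Real.sqrt_nonneg _))]
  rw [lintegral_const_mul' _ _ ENNReal.ofReal_ne_top]
  · rw [G1 _ _ _ hα, ← ENNReal.ofReal_mul (inv_nonneg.mpr (Real.sqrt_nonneg _)),
      ← ENNReal.ofReal_mul (by positivity)]
    congr 1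
    rw [← mul_assoc]
    congr 1
    · rw [← Real.sqrt_inv, ← Real.sqrt_mul (by positivity)]
      rw [show (2*π)⁻¹ * (π/α) = (2*α)⁻¹ by field_simp, Real.sqrt_inv]
      congr 2
      simp [hαdef]; ring
    · rw [show 4*α = 2*(1-2*q) by rw [hαdef]; ring]

-- Piece 3: 2-d mgf
lemma G3 (a b t : ℝ) (ht : t * (a^2+b^2) < 1/2) :
    ∫⁻ u : ℝ × ℝ, ENNReal.ofReal (rexp (t * (a*u.1 + b*u.2)^2))
        ∂((gaussianReal 0 1).prod (gaussianReal 0 1)) =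
      ENNReal.ofReal ((Real.sqrt (1 - 2*t*(a^2+b^2)))⁻¹) := by
  have hb2 : t * b^2 < 1/2 := by
    rcases le_or_gt 0 t with h | h
    · nlinarith [sq_nonneg a]
    · nlinarith [sq_nonneg b]
  set β := 1 - 2*(t*b^2) with hβdef
  have hβ : 0 < β := by simp only [hβdef]; linarith
  have hq' : (2*t^2*a^2*b^2/β + t*a^2) < 1/2 := by
    rw [div_add' _ _ _ hβ.ne', div_lt_iff₀ hβ]
    simp only [hβdef]
    nlinarith [sq_nonneg (t*a*b)]
  rw [lintegral_prod _ (by fun_prop)]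
  have hinner : ∀ u : ℝ, ∫⁻ w : ℝ, ENNReal.ofReal (rexp (t * (a*u + b*w)^2)) ∂(gaussianReal 0 1)
      = ENNReal.ofReal ((Real.sqrt β)⁻¹) *
        ENNReal.ofReal (rexp ((2*t^2*a^2*b^2/β + t*a^2) * u^2 + 0*u + 0)) := by
    intro u
    have : ∀ w : ℝ, t * (a*u + b*w)^2 = (t*b^2) * w^2 + (2*t*a*b*u) * w + (t*a^2*u^2) := by
      intro w; ring
    simp_rw [this]
    rw [G2 _ _ _ hb2, ← hβdef, ENNReal.ofReal_mul (inv_nonneg.mpr (Real.sqrt_nonneg _))]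
    congr 2
    field_simp
    ring
  simp_rw [hinner]
  rw [lintegral_const_mul' _ _ ENNReal.ofReal_ne_top, G2 _ _ _ hq',
    ← ENNReal.ofReal_mul (inv_nonneg.mpr (Real.sqrt_nonneg _))]
  congr 1
  rw [zero_pow (by norm_num), zero_div, zero_add, Real.exp_zero, mul_one,
    ← mul_inv, ← Real.sqrt_mul hβ.le]
  congr 2
  field_simp
  ring

-- Piece 4: lintegral of product over pi measure
lemma P1 {E : Type*} [MeasurableSpace E] (μ : Measure E) [IsProbabilityMeasure μ]
    (g : E → ENNReal) (hg : Measurable g) :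
    ∀ n : ℕ, ∫⁻ x : Fin n → E, ∏ i, g (x i) ∂(Measure.pi fun _ => μ) = (∫⁻ x, g x ∂μ) ^ n := by
  intro n
  induction n with
  | zero => simp
  | succ n ih =>
    have hmp := measurePreserving_piFinSuccAbove (fun _ : Fin (n+1) => μ) 0
    have hG : Measurable fun y : E × (Fin n → E) => g y.1 * ∏ i, g (y.2 i) := by
      apply Measurable.mul (hg.comp measurable_fst)
      exact (Finset.measurable_prod _ fun i _ => hg.comp ((measurable_pi_apply i).comp measurable_snd))
    have := hmp.lintegral_comp hG
    simp only [MeasurableEquiv.piFinSuccAbove_apply, Fin.insertNthEquiv,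
      Equiv.coe_fn_symm_mk, Fin.removeNth] at this
    calc ∫⁻ x : Fin (n+1) → E, ∏ i, g (x i) ∂(Measure.pi fun _ => μ)
        = ∫⁻ x : Fin (n+1) → E, g (x 0) * ∏ i : Fin n, g (x ((0 : Fin (n+1)).succAbove i))
            ∂(Measure.pi fun _ => μ) := by
          congr 1; ext x; rw [Fin.prod_univ_succAbove (fun i => g (x i)) 0]
      _ = ∫⁻ y : E × (Fin n → E), g y.1 * ∏ i, g (y.2 i)
            ∂(μ.prod (Measure.pi fun _ : Fin n => μ)) := this
      _ = (∫⁻ x, g x ∂μ) * (∫⁻ x, g x ∂μ) ^ n := by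
          rw [lintegral_prod_mul (f := g) (g := fun x : Fin n → E => ∏ i, g (x i)) hg.aemeasurable
            (Finset.measurable_prod _ fun i _ => hg.comp (measurable_pi_apply i)).aemeasurable, ih]
      _ = (∫⁻ x, g x ∂μ) ^ (n+1) := by ring

-- generic Markov/Chernoff step
lemma chernoff_s15 {Ω : Type*} [MeasurableSpace Ω] (μ : Measure Ω) (Y : Ω → ℝ)
    (hY : Measurable Y) (c : ℝ) (M : ENNReal)
    (h : ∫⁻ x, ENNReal.ofReal (rexp (Y x)) ∂μ ≤ M) :
    μ {x | c ≤ Y x} ≤ ENNReal.ofReal (rexp (-c)) * M := by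
  have hset : {x | c ≤ Y x} = {x | ENNReal.ofReal (rexp c) ≤ ENNReal.ofReal (rexp (Y x))} := by
    ext x
    simp only [Set.mem_setOf_eq, ENNReal.ofReal_le_ofReal_iff (exp_pos _).le, Real.exp_le_exp]
  have hm := mul_meas_ge_le_lintegral₀ (μ := μ)
    (f := fun x => ENNReal.ofReal (rexp (Y x))) (by fun_prop) (ENNReal.ofReal (rexp c))
  rw [← hset] at hm
  have h2 : ENNReal.ofReal (rexp c) * μ {x | c ≤ Y x} ≤ M := hm.trans h
  have hpos : (0:ENNReal) < ENNReal.ofReal (rexp c) := ENNReal.ofReal_pos.mpr (exp_pos _)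
  calc μ {x | c ≤ Y x}
      = (ENNReal.ofReal (rexp c))⁻¹ * (ENNReal.ofReal (rexp c) * μ {x | c ≤ Y x}) := by
        rw [← mul_assoc, ENNReal.inv_mul_cancel hpos.ne' ENNReal.ofReal_ne_top, one_mul]
    _ ≤ (ENNReal.ofReal (rexp c))⁻¹ * M := by gcongr
    _ = ENNReal.ofReal (rexp (-c)) * M := by
        rw [Real.exp_neg, ENNReal.ofReal_inv_of_pos (exp_pos _)]

-- mgf of sum over pi measure
lemma mgfsum (a b t : ℝ) (ht : t * (a^2+b^2) < 1/2) (n : ℕ) :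
    ∫⁻ x : Fin n → ℝ × ℝ, ENNReal.ofReal (rexp (t * ∑ i, (a*(x i).1 + b*(x i).2)^2))
        ∂(Measure.pi fun _ => (gaussianReal 0 1).prod (gaussianReal 0 1)) =
      ENNReal.ofReal ((Real.sqrt (1 - 2*t*(a^2+b^2)))⁻¹) ^ n := by
  have : ∀ x : Fin n → ℝ × ℝ, ENNReal.ofReal (rexp (t * ∑ i, (a*(x i).1 + b*(x i).2)^2))
      = ∏ i, ENNReal.ofReal (rexp (t * (a*(x i).1 + b*(x i).2)^2)) := by
    intro x
    rw [Finset.mul_sum, Real.exp_sum, ← ENNReal.ofReal_prod_of_nonneg]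
    exact fun i _ => (exp_pos _).le
  simp_rw [this]
  rw [P1 ((gaussianReal 0 1).prod (gaussianReal 0 1))
    (fun u : ℝ × ℝ => ENNReal.ofReal (rexp (t * (a*u.1 + b*u.2)^2))) (by fun_prop) n,
    G3 _ _ _ ht]

lemma sq_le_helper {x y : ℝ} (hx : 0 ≤ x) (hy : 0 ≤ y) (h : x^2 ≤ y^2) : x ≤ y := by
  nlinarith

lemma R1 {δ : ℝ} (hδ : 0 < δ) (hδ1 : δ ≤ 1) :
    rexp (-(δ/6) * (1+δ)) * (Real.sqrt (1 - 2*(δ/6)*1))⁻¹ ≤ rexp (-δ^2/12) := by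
  have h13 : (0:ℝ) < 1 - δ/3 := by linarith
  apply sq_le_helper (by positivity) (by positivity)
  rw [mul_pow, ← Real.exp_nat_mul, ← Real.exp_nat_mul, ← Real.sqrt_inv,
    Real.sq_sqrt (inv_nonneg.mpr (by linarith))]
  have key : rexp (↑(2:ℕ) * (-(δ/6) * (1+δ))) * (1 - 2*(δ/6)*1)⁻¹ ≤ rexp (↑(2:ℕ) * (-δ^2/12)) := by
    push_cast
    rw [show (2:ℝ) * (-(δ/6) * (1+δ)) = 2 * (-δ^2/12) + -(δ/3 + δ^2/6) by ring, Real.exp_add,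
      mul_assoc]
    have hz : rexp (-(δ/3 + δ^2/6)) * (1 - 2*(δ/6)*1)⁻¹ ≤ 1 := by
      rw [Real.exp_neg]
      have h1 : 1 + (δ/3 + δ^2/6) ≤ rexp (δ/3 + δ^2/6) := by
        have := Real.add_one_le_exp (δ/3 + δ^2/6); linarith
      have h2 : (rexp (δ/3 + δ^2/6))⁻¹ ≤ (1 + (δ/3 + δ^2/6))⁻¹ := by
        apply inv_anti₀ (by positivity) h1
      have h3 : (1 + (δ/3 + δ^2/6))⁻¹ * (1 - 2*(δ/6)*1)⁻¹ ≤ 1 := by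
        rw [← mul_inv]
        rw [inv_le_one_iff₀]
        right
        nlinarith
      calc (rexp (δ/3 + δ^2/6))⁻¹ * (1 - 2*(δ/6)*1)⁻¹
          ≤ (1 + (δ/3 + δ^2/6))⁻¹ * (1 - 2*(δ/6)*1)⁻¹ := by
            apply mul_le_mul_of_nonneg_right h2 (inv_nonneg.mpr (by linarith))
        _ ≤ 1 := h3
    calc rexp (2 * (-δ^2/12)) * (rexp (-(δ/3 + δ^2/6)) * (1 - 2*(δ/6)*1)⁻¹)
        ≤ rexp (2 * (-δ^2/12)) * 1 := by
          apply mul_le_mul_of_nonneg_left hz (exp_pos _).le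
      _ = rexp (2 * (-δ^2/12)) := mul_one _
  exact key

lemma R2 {δ : ℝ} (hδ : 0 < δ) (hδ1 : δ ≤ 1) :
    rexp ((δ/4) * (1-δ)) * (Real.sqrt (1 - 2*(-(δ/4))*1))⁻¹ ≤ rexp (-δ^2/12) := by
  have h12 : (0:ℝ) < 1 + δ/2 := by linarith
  apply sq_le_helper (by positivity) (by positivity)
  rw [mul_pow, ← Real.exp_nat_mul, ← Real.exp_nat_mul, ← Real.sqrt_inv,
    Real.sq_sqrt (inv_nonneg.mpr (by linarith))]
  push_cast
  rw [show (2:ℝ) * ((δ/4) * (1-δ)) = 2 * (-δ^2/12) + (δ/2 - δ^2/3) by ring, Real.exp_add, mul_assoc]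
  have hz : rexp (δ/2 - δ^2/3) * (1 - 2*(-(δ/4))*1)⁻¹ ≤ 1 := by
    have hw : (0:ℝ) < 1 - (δ/2 - δ^2/3) := by nlinarith
    have h1 : rexp (δ/2 - δ^2/3) ≤ (1 - (δ/2 - δ^2/3))⁻¹ := by
      rw [inv_eq_one_div, le_div_iff₀ hw]
      have hh := Real.add_one_le_exp (-(δ/2 - δ^2/3))
      have hexp : rexp (-(δ/2 - δ^2/3)) * rexp (δ/2 - δ^2/3) = 1 := by
        rw [← Real.exp_add]; simp
      nlinarith [mul_le_mul_of_nonneg_right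
        (by linarith : 1 - (δ/2 - δ^2/3) ≤ rexp (-(δ/2 - δ^2/3))) (exp_pos (δ/2 - δ^2/3)).le]
    have h3 : (1 - (δ/2 - δ^2/3))⁻¹ * (1 - 2*(-(δ/4))*1)⁻¹ ≤ 1 := by
      rw [← mul_inv, inv_le_one_iff₀]
      right
      nlinarith
    calc rexp (δ/2 - δ^2/3) * (1 - 2*(-(δ/4))*1)⁻¹
        ≤ (1 - (δ/2 - δ^2/3))⁻¹ * (1 - 2*(-(δ/4))*1)⁻¹ :=
          mul_le_mul_of_nonneg_right h1 (inv_nonneg.mpr (by linarith))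
      _ ≤ 1 := h3
  calc rexp (2 * (-δ^2/12)) * (rexp (δ/2 - δ^2/3) * (1 - 2*(-(δ/4))*1)⁻¹)
      ≤ rexp (2 * (-δ^2/12)) * 1 := mul_le_mul_of_nonneg_left hz (exp_pos _).le
    _ = rexp (2 * (-δ^2/12)) := mul_one _

lemma main_tail (a b δ : ℝ) (n : ℕ) (hδ : 0 < δ) (hδ1 : δ ≤ 1) (hv : 0 < a^2 + b^2) :
    (Measure.pi fun _ : Fin n => (gaussianReal 0 1).prod (gaussianReal 0 1))
      {x | δ * (a^2+b^2) ≤ |1/(n:ℝ) * (∑ i, (a*(x i).1 + b*(x i).2)^2) - (a^2+b^2)|}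
      ≤ ENNReal.ofReal (2 * rexp (-(n:ℝ) * δ^2 / 12)) := by
  set v := a^2 + b^2 with hvdef
  set μ := (Measure.pi fun _ : Fin n => (gaussianReal 0 1).prod (gaussianReal 0 1)) with hμdef
  rcases Nat.eq_zero_or_pos n with hn | hn
  · subst hn
    calc μ _ ≤ μ Set.univ := measure_mono (Set.subset_univ _)
      _ = 1 := measure_univ
      _ ≤ ENNReal.ofReal (2 * rexp (-(0:ℕ) * δ^2 / 12)) := by
          norm_num [ENNReal.one_le_ofReal]
  have hn0 : (0:ℝ) < n := by exact_mod_cast hn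
  set t := δ/(6*v) with htdef
  set t' := -(δ/(4*v)) with ht'def
  have ht : t * v = δ/6 := by rw [htdef]; field_simp; try ring
  have ht' : t' * v = -(δ/4) := by rw [ht'def]; field_simp; try ring
  have htpos : 0 < t := by rw [htdef]; positivity
  have ht'neg : t' < 0 := by
    have : 0 < δ/(4*v) := by positivity
    rw [ht'def]; linarith
  set S := fun x : Fin n → ℝ × ℝ => ∑ i, (a*(x i).1 + b*(x i).2)^2 with hSdef
  have hSmeas : Measurable S := by fun_prop
  have hsub : {x | δ * v ≤ |1/(n:ℝ) * S x - v|} ⊆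
      {x | t * ((n:ℝ)*v*(1+δ)) ≤ t * S x} ∪ {x | t' * ((n:ℝ)*v*(1-δ)) ≤ t' * S x} := by
    intro x hx
    simp only [Set.mem_setOf_eq] at hx
    rcases le_abs.mp hx with h | h
    · left
      have h1 : (n:ℝ) * (δ*v) ≤ n * (1/n * S x - v) :=
        mul_le_mul_of_nonneg_left h hn0.le
      have h2 : (n:ℝ) * (1/n * S x - v) = S x - n * v := by field_simp; try ring
      rw [h2] at h1
      have h3 : (n:ℝ)*v*(1+δ) ≤ S x := by nlinarith
      exact mul_le_mul_of_nonneg_left h3 htpos.le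
    · right
      have h1 : (n:ℝ) * (δ*v) ≤ n * (-(1/n * S x - v)) :=
        mul_le_mul_of_nonneg_left h hn0.le
      have h2 : (n:ℝ) * (-(1/n * S x - v)) = n * v - S x := by field_simp; try ring
      rw [h2] at h1
      have h3 : S x ≤ (n:ℝ)*v*(1-δ) := by nlinarith
      exact mul_le_mul_of_nonpos_left h3 ht'neg.le
  have hmgf1 := mgfsum a b t (by rw [← hvdef, ht]; linarith) n
  have hmgf2 := mgfsum a b t' (by rw [← hvdef, ht']; linarith) n
  have hb1 : μ {x | t * ((n:ℝ)*v*(1+δ)) ≤ t * S x} ≤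
      ENNReal.ofReal (rexp (-(t * ((n:ℝ)*v*(1+δ))))) *
        ENNReal.ofReal ((Real.sqrt (1 - 2*t*v))⁻¹) ^ n := by
    apply chernoff_s15 μ (fun x => t * S x) (by fun_prop)
    rw [hμdef]
    simp only [hSdef]
    rw [hmgf1, ← hvdef]
  have hb2 : μ {x | t' * ((n:ℝ)*v*(1-δ)) ≤ t' * S x} ≤
      ENNReal.ofReal (rexp (-(t' * ((n:ℝ)*v*(1-δ))))) *
        ENNReal.ofReal ((Real.sqrt (1 - 2*t'*v))⁻¹) ^ n := by
    apply chernoff_s15 μ (fun x => t' * S x) (by fun_prop)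
    rw [hμdef]
    simp only [hSdef]
    rw [hmgf2, ← hvdef]
  have e1 : ENNReal.ofReal (rexp (-(t * ((n:ℝ)*v*(1+δ))))) *
      ENNReal.ofReal ((Real.sqrt (1 - 2*t*v))⁻¹) ^ n ≤ ENNReal.ofReal (rexp (-(n:ℝ) * δ^2 / 12)) := by
    rw [← ENNReal.ofReal_pow (inv_nonneg.mpr (Real.sqrt_nonneg _)),
      ← ENNReal.ofReal_mul (exp_pos _).le]
    apply ENNReal.ofReal_le_ofReal
    have harg : 1 - 2*t*v = 1 - 2*(δ/6)*1 := by rw [mul_assoc, ht]; ring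
    have hc : -(t * ((n:ℝ)*v*(1+δ))) = (n:ℝ) * (-(δ/6) * (1+δ)) := by
      have : t * ((n:ℝ)*v*(1+δ)) = (n:ℝ) * ((t*v) * (1+δ)) := by ring
      rw [this, ht]; ring
    rw [harg, hc, Real.exp_nat_mul, ← mul_pow,
      show -(n:ℝ) * δ^2/12 = (n:ℝ) * (-δ^2/12) by ring, Real.exp_nat_mul]
    exact pow_le_pow_left₀ (by positivity) (R1 hδ hδ1) n
  have e2 : ENNReal.ofReal (rexp (-(t' * ((n:ℝ)*v*(1-δ))))) *
      ENNReal.ofReal ((Real.sqrt (1 - 2*t'*v))⁻¹) ^ n ≤ ENNReal.ofReal (rexp (-(n:ℝ) * δ^2 / 12)) := by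
    rw [← ENNReal.ofReal_pow (inv_nonneg.mpr (Real.sqrt_nonneg _)),
      ← ENNReal.ofReal_mul (exp_pos _).le]
    apply ENNReal.ofReal_le_ofReal
    have harg : 1 - 2*t'*v = 1 - 2*(-(δ/4))*1 := by rw [mul_assoc, ht']; ring
    have hc : -(t' * ((n:ℝ)*v*(1-δ))) = (n:ℝ) * ((δ/4) * (1-δ)) := by
      have : t' * ((n:ℝ)*v*(1-δ)) = (n:ℝ) * ((t'*v) * (1-δ)) := by ring
      rw [this, ht']; ring
    rw [harg, hc, Real.exp_nat_mul, ← mul_pow,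
      show -(n:ℝ) * δ^2/12 = (n:ℝ) * (-δ^2/12) by ring, Real.exp_nat_mul]
    exact pow_le_pow_left₀ (by positivity) (R2 hδ hδ1) n
  calc μ {x | δ * v ≤ |1/(n:ℝ) * S x - v|}
      ≤ μ ({x | t * ((n:ℝ)*v*(1+δ)) ≤ t * S x} ∪ {x | t' * ((n:ℝ)*v*(1-δ)) ≤ t' * S x}) :=
        measure_mono hsub
    _ ≤ μ {x | t * ((n:ℝ)*v*(1+δ)) ≤ t * S x} + μ {x | t' * ((n:ℝ)*v*(1-δ)) ≤ t' * S x} :=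
        measure_union_le _ _
    _ ≤ ENNReal.ofReal (rexp (-(n:ℝ) * δ^2 / 12)) + ENNReal.ofReal (rexp (-(n:ℝ) * δ^2 / 12)) := by
        exact add_le_add (hb1.trans e1) (hb2.trans e2)
    _ = ENNReal.ofReal (2 * rexp (-(n:ℝ) * δ^2 / 12)) := by
        rw [← ENNReal.ofReal_add (exp_pos _).le (exp_pos _).le, two_mul]

lemma pi_map {E F : Type*} [MeasurableSpace E] [MeasurableSpace F] (n : ℕ) (f : E → F)
    (hf : Measurable f) (μ : Measure E) [IsProbabilityMeasure μ] :
    (Measure.pi fun _ : Fin n => μ.map f) =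
      (Measure.pi fun _ : Fin n => μ).map (fun x i => f (x i)) := by
  haveI : IsProbabilityMeasure (μ.map f) := Measure.isProbabilityMeasure_map hf.aemeasurable
  have hPhi : Measurable fun (x : Fin n → E) (i : Fin n) => f (x i) :=
    measurable_pi_lambda _ fun i => hf.comp (measurable_pi_apply i)
  refine Measure.pi_eq fun s hs => ?_
  rw [Measure.map_apply hPhi (MeasurableSet.univ_pi hs)]
  have : (fun x (i : Fin n) => f (x i)) ⁻¹' Set.univ.pi s = Set.univ.pi fun i => f ⁻¹' (s i) := by
    ext x; simp [Set.mem_pi]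
  rw [this, Measure.pi_pi]
  exact Finset.prod_congr rfl fun i _ => (Measure.map_apply hf (hs i)).symm

lemma absorb2 {A : ℝ} (hA : 48 ≤ A) : 2 * rexp (-A/12) ≤ rexp (-A/16) := by
  have h1 : (2:ℝ) ≤ rexp (A/48) := by
    have h2 : (2:ℝ) ≤ rexp 1 := by have := Real.add_one_le_exp 1; linarith
    exact h2.trans (Real.exp_le_exp.mpr (by linarith))
  calc 2 * rexp (-A/12) ≤ rexp (A/48) * rexp (-A/12) :=
        mul_le_mul_of_nonneg_right h1 (exp_pos _).le
    _ = rexp (-A/16) := by rw [← Real.exp_add]; ring_nf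

lemma absorb3 {A : ℝ} (hA : 2048 ≤ A) :
    2 * rexp (-A/48) + (2 * rexp (-A/48) + 2 * rexp (-A/192)) ≤ rexp (-A/2048) := by
  have hmono : rexp (-A/48) ≤ rexp (-A/192) := Real.exp_le_exp.mpr (by linarith)
  have h1 : (6:ℝ) ≤ rexp (A/192 - A/2048) := by
    have harg : (29/3:ℝ) ≤ A/192 - A/2048 := by linarith
    have := Real.add_one_le_exp (A/192 - A/2048)
    linarith
  have h2 : 6 * rexp (-A/192) ≤ rexp (-A/2048) := by
    calc 6 * rexp (-A/192) ≤ rexp (A/192 - A/2048) * rexp (-A/192) :=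
          mul_le_mul_of_nonneg_right h1 (exp_pos _).le
      _ = rexp (-A/2048) := by rw [← Real.exp_add]; ring_nf
  nlinarith [exp_pos (-A/48), exp_pos (-A/192)]

noncomputable def stdBivariate (r : ℝ) : Measure (ℝ × ℝ) :=
  Measure.map (fun u : ℝ × ℝ => (u.1, r * u.1 + Real.sqrt (1 - r ^ 2) * u.2))
    ((gaussianReal 0 1).prod (gaussianReal 0 1))

set_option maxHeartbeats 2000000 in
/-- Concentration of sample variances and sample covariance for a standardized
bivariate Gaussian. -/
theorem stmt_15 (r : ℝ) (hr : |r| ≤ 1) (n : ℕ) (ζ : ℝ)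
    (hζ : ζ ∈ Set.Ioo (0 : ℝ) 1) (hn : 2048 * Real.log 7 / ζ ^ 2 ≤ n) :
    (Measure.pi fun _ : Fin n => stdBivariate r)
        {x | ζ ≤ |(1 / (n : ℝ)) * (∑ i, (x i).1 ^ 2) - 1|} ≤
      ENNReal.ofReal (Real.exp (-(n : ℝ) * ζ ^ 2 / 16)) ∧
    (Measure.pi fun _ : Fin n => stdBivariate r)
        {x | ζ ≤ |(1 / (n : ℝ)) * (∑ i, (x i).2 ^ 2) - 1|} ≤
      ENNReal.ofReal (Real.exp (-(n : ℝ) * ζ ^ 2 / 16)) ∧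
    (Measure.pi fun _ : Fin n => stdBivariate r)
        {x | ζ ≤ |(1 / (n : ℝ)) * (∑ i, (x i).1 * (x i).2) - r|} ≤
      ENNReal.ofReal (Real.exp (-(n : ℝ) * ζ ^ 2 / 2048)) := by
  obtain ⟨hζ0, hζ1⟩ := hζ
  have hr' := abs_le.mp hr
  have h1r : 0 ≤ 1 - r^2 := by nlinarith [hr'.1, hr'.2]
  have hsq : Real.sqrt (1-r^2)^2 = 1 - r^2 := Real.sq_sqrt h1r
  have hζsq : (0:ℝ) < ζ^2 := by positivity
  have hlog7 : (1:ℝ) ≤ Real.log 7 := by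
    have h7 : rexp 1 ≤ 7 := by have := Real.exp_one_lt_d9; linarith
    calc (1:ℝ) = Real.log (rexp 1) := (Real.log_exp 1).symm
      _ ≤ Real.log 7 := Real.log_le_log (exp_pos 1) h7
  have hkey : (2048:ℝ) ≤ (n:ℝ) * ζ^2 := by
    rw [div_le_iff₀ hζsq] at hn
    nlinarith [hn]
  set s := Real.sqrt (1-r^2) with hsdef
  have hΦ : Measurable fun (x : Fin n → ℝ × ℝ) (i : Fin n) =>
      ((x i).1, r * (x i).1 + s * (x i).2) := by fun_prop
  have hmap : (Measure.pi fun _ : Fin n => stdBivariate r)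
      = (Measure.pi fun _ : Fin n => (gaussianReal 0 1).prod (gaussianReal 0 1)).map
          (fun x i => ((x i).1, r * (x i).1 + s * (x i).2)) := by
    simp only [stdBivariate, ← hsdef]
    exact pi_map n _ (by fun_prop) _
  set μ := (Measure.pi fun _ : Fin n => (gaussianReal 0 1).prod (gaussianReal 0 1)) with hμ
  refine ⟨?_, ?_, ?_⟩
  · -- first claim
    rw [hmap, Measure.map_apply hΦ
      (measurableSet_le measurable_const (by fun_prop))]
    have hpre : (fun (x : Fin n → ℝ × ℝ) (i : Fin n) => ((x i).1, r * (x i).1 + s * (x i).2))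
        ⁻¹' {x | ζ ≤ |(1 / (n : ℝ)) * (∑ i, (x i).1 ^ 2) - 1|}
        = {x : Fin n → ℝ × ℝ | ζ * (1^2+0^2) ≤
            |1/(n:ℝ) * (∑ i, (1*(x i).1 + 0*(x i).2)^2) - (1^2+0^2)|} := by
      ext x; norm_num
    rw [hpre]
    refine (main_tail 1 0 ζ n hζ0 hζ1.le (by norm_num)).trans (ENNReal.ofReal_le_ofReal ?_)
    rw [show -(n:ℝ) * ζ^2 / 12 = -((n:ℝ)*ζ^2)/12 by ring,
      show -(n:ℝ) * ζ^2 / 16 = -((n:ℝ)*ζ^2)/16 by ring]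
    exact absorb2 (by linarith)
  · -- second claim
    rw [hmap, Measure.map_apply hΦ
      (measurableSet_le measurable_const (by fun_prop))]
    have hv1 : r^2 + s^2 = 1 := by rw [hsdef, hsq]; ring
    have hb := main_tail r s ζ n hζ0 hζ1.le (by rw [hv1]; norm_num)
    rw [hv1, mul_one] at hb
    have hpre : (fun (x : Fin n → ℝ × ℝ) (i : Fin n) => ((x i).1, r * (x i).1 + s * (x i).2))
        ⁻¹' {x | ζ ≤ |(1 / (n : ℝ)) * (∑ i, (x i).2 ^ 2) - 1|}
        = {x : Fin n → ℝ × ℝ | ζ ≤ |1/(n:ℝ) * (∑ i, (r*(x i).1 + s*(x i).2)^2) - 1|} := rfl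
    rw [hpre]
    refine hb.trans (ENNReal.ofReal_le_ofReal ?_)
    rw [show -(n:ℝ) * ζ^2 / 12 = -((n:ℝ)*ζ^2)/12 by ring,
      show -(n:ℝ) * ζ^2 / 16 = -((n:ℝ)*ζ^2)/16 by ring]
    exact absorb2 (by linarith)
  · -- third claim
    rw [hmap, Measure.map_apply hΦ
      (measurableSet_le measurable_const (by fun_prop))]
    have hpre : (fun (x : Fin n → ℝ × ℝ) (i : Fin n) => ((x i).1, r * (x i).1 + s * (x i).2))
        ⁻¹' {x | ζ ≤ |(1 / (n : ℝ)) * (∑ i, (x i).1 * (x i).2) - r|}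
        = {x : Fin n → ℝ × ℝ |
            ζ ≤ |1/(n:ℝ) * (∑ i, (x i).1 * (r*(x i).1 + s*(x i).2)) - r|} := rfl
    rw [hpre]
    have hv1 : r^2 + s^2 = 1 := by rw [hsdef, hsq]; ring
    rcases le_or_gt 0 r with hr0 | hr0
    · -- r ≥ 0 : use (X+W)²
      have hw2 : (1+r)^2 + s^2 = 2+2*r := by rw [hsdef, hsq]; ring
      have hwpos : (0:ℝ) < 2+2*r := by linarith
      have hεw : ζ/(2+2*r) * (2+2*r) = ζ := by field_simp
      set B1 : Set (Fin n → ℝ × ℝ) :=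
        {x | ζ/2 ≤ |1/(n:ℝ) * (∑ i, (x i).1^2) - 1|} with hB1def
      set B2 : Set (Fin n → ℝ × ℝ) :=
        {x | ζ/2 ≤ |1/(n:ℝ) * (∑ i, (r*(x i).1 + s*(x i).2)^2) - 1|} with hB2def
      set B3 : Set (Fin n → ℝ × ℝ) :=
        {x | ζ ≤ |1/(n:ℝ) * (∑ i, ((1+r)*(x i).1 + s*(x i).2)^2) - (2+2*r)|} with hB3def
      have hb1 : μ B1 ≤ ENNReal.ofReal (2 * rexp (-(n:ℝ) * (ζ/2)^2 / 12)) := by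
        have h := main_tail 1 0 (ζ/2) n (by positivity) (by linarith) (by norm_num)
        have hse : {x : Fin n → ℝ × ℝ | (ζ/2) * (1^2+0^2) ≤
            |1/(n:ℝ) * (∑ i, (1*(x i).1 + 0*(x i).2)^2) - (1^2+0^2)|} = B1 := by
          ext x; rw [hB1def]; norm_num
        rwa [hse] at h
      have hb2 : μ B2 ≤ ENNReal.ofReal (2 * rexp (-(n:ℝ) * (ζ/2)^2 / 12)) := by
        have h := main_tail r s (ζ/2) n (by positivity) (by linarith) (by rw [hv1]; norm_num)
        rwa [hv1, mul_one] at h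
      have hb3 : μ B3 ≤ ENNReal.ofReal (2 * rexp (-(n:ℝ) * (ζ/(2+2*r))^2 / 12)) := by
        have h := main_tail (1+r) s (ζ/(2+2*r)) n (div_pos hζ0 hwpos)
          (by rw [div_le_one hwpos]; linarith) (by rw [hw2]; linarith)
        rwa [hw2, hεw] at h
      have hsub : {x : Fin n → ℝ × ℝ |
          ζ ≤ |1/(n:ℝ) * (∑ i, (x i).1 * (r*(x i).1 + s*(x i).2)) - r|} ⊆ B1 ∪ B2 ∪ B3 := by
        intro x hx
        simp only [Set.mem_setOf_eq] at hx
        by_contra hmem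
        simp only [Set.mem_union, hB1def, hB2def, hB3def, Set.mem_setOf_eq, not_or,
          not_le] at hmem
        obtain ⟨⟨h1, h2⟩, h3⟩ := hmem
        have hid : (∑ i, ((1+r)*(x i).1 + s*(x i).2)^2)
            = (∑ i, (x i).1^2) + (∑ i, (r*(x i).1+s*(x i).2)^2)
              + 2*(∑ i, (x i).1*(r*(x i).1+s*(x i).2)) := by
          rw [Finset.mul_sum, ← Finset.sum_add_distrib, ← Finset.sum_add_distrib]
          exact Finset.sum_congr rfl fun i _ => by ring
        rw [hid] at h3
        obtain ⟨h1a, h1b⟩ := abs_lt.mp h1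
        obtain ⟨h2a, h2b⟩ := abs_lt.mp h2
        obtain ⟨h3a, h3b⟩ := abs_lt.mp h3
        rcases le_abs.mp hx with h | h
        · linarith
        · linarith
      calc μ _ ≤ μ (B1 ∪ B2 ∪ B3) := measure_mono hsub
        _ ≤ μ (B1 ∪ B2) + μ B3 := measure_union_le _ _
        _ ≤ (μ B1 + μ B2) + μ B3 := add_le_add_left (measure_union_le _ _) _
        _ ≤ (ENNReal.ofReal (2 * rexp (-(n:ℝ) * (ζ/2)^2 / 12)) +
              ENNReal.ofReal (2 * rexp (-(n:ℝ) * (ζ/2)^2 / 12))) +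
              ENNReal.ofReal (2 * rexp (-(n:ℝ) * (ζ/(2+2*r))^2 / 12)) :=
            add_le_add (add_le_add hb1 hb2) hb3
        _ ≤ ENNReal.ofReal (Real.exp (-(n : ℝ) * ζ ^ 2 / 2048)) := by
            rw [← ENNReal.ofReal_add (by positivity) (by positivity),
              ← ENNReal.ofReal_add (by positivity) (by positivity)]
            apply ENNReal.ofReal_le_ofReal
            have hε4 : ζ/4 ≤ ζ/(2+2*r) :=
              div_le_div_of_nonneg_left hζ0.le hwpos (by linarith)
            have he3 : 2 * rexp (-(n:ℝ) * (ζ/(2+2*r))^2 / 12) ≤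
                2 * rexp (-((n:ℝ)*ζ^2)/192) := by
              have : -(n:ℝ) * (ζ/(2+2*r))^2 / 12 ≤ -((n:ℝ)*ζ^2)/192 := by
                have hn0 : (0:ℝ) ≤ n := Nat.cast_nonneg n
                have hε2 : ζ^2/16 ≤ (ζ/(2+2*r))^2 := by
                  nlinarith [hε4, hζ0, div_pos hζ0 hwpos]
                have := mul_le_mul_of_nonneg_left hε2 hn0
                linarith
              linarith [Real.exp_le_exp.mpr this]
            have he1 : -(n:ℝ) * (ζ/2)^2 / 12 = -((n:ℝ)*ζ^2)/48 := by ring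
            rw [he1]
            have := absorb3 hkey
            rw [show -(n:ℝ) * ζ^2 / 2048 = -((n:ℝ)*ζ^2)/2048 by ring]
            linarith
    · -- r < 0 : use (X−W)²
      have hw2 : (1-r)^2 + (-s)^2 = 2-2*r := by rw [neg_sq, hsdef, hsq]; ring
      have hwpos : (0:ℝ) < 2-2*r := by linarith
      have hεw : ζ/(2-2*r) * (2-2*r) = ζ := div_mul_cancel₀ _ hwpos.ne'
      set B1 : Set (Fin n → ℝ × ℝ) :=
        {x | ζ/2 ≤ |1/(n:ℝ) * (∑ i, (x i).1^2) - 1|} with hB1def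
      set B2 : Set (Fin n → ℝ × ℝ) :=
        {x | ζ/2 ≤ |1/(n:ℝ) * (∑ i, (r*(x i).1 + s*(x i).2)^2) - 1|} with hB2def
      set B3 : Set (Fin n → ℝ × ℝ) :=
        {x | ζ ≤ |1/(n:ℝ) * (∑ i, ((1-r)*(x i).1 + -s*(x i).2)^2) - (2-2*r)|} with hB3def
      have hb1 : μ B1 ≤ ENNReal.ofReal (2 * rexp (-(n:ℝ) * (ζ/2)^2 / 12)) := by
        have h := main_tail 1 0 (ζ/2) n (by positivity) (by linarith) (by norm_num)
        have hse : {x : Fin n → ℝ × ℝ | (ζ/2) * (1^2+0^2) ≤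
            |1/(n:ℝ) * (∑ i, (1*(x i).1 + 0*(x i).2)^2) - (1^2+0^2)|} = B1 := by
          ext x; rw [hB1def]; norm_num
        rwa [hse] at h
      have hb2 : μ B2 ≤ ENNReal.ofReal (2 * rexp (-(n:ℝ) * (ζ/2)^2 / 12)) := by
        have h := main_tail r s (ζ/2) n (by positivity) (by linarith) (by rw [hv1]; norm_num)
        rwa [hv1, mul_one] at h
      have hb3 : μ B3 ≤ ENNReal.ofReal (2 * rexp (-(n:ℝ) * (ζ/(2-2*r))^2 / 12)) := by
        have h := main_tail (1-r) (-s) (ζ/(2-2*r)) n (div_pos hζ0 hwpos)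
          (by rw [div_le_one hwpos]; linarith) (by rw [hw2]; linarith)
        rwa [hw2, hεw] at h
      have hsub : {x : Fin n → ℝ × ℝ |
          ζ ≤ |1/(n:ℝ) * (∑ i, (x i).1 * (r*(x i).1 + s*(x i).2)) - r|} ⊆ B1 ∪ B2 ∪ B3 := by
        intro x hx
        simp only [Set.mem_setOf_eq] at hx
        by_contra hmem
        simp only [Set.mem_union, hB1def, hB2def, hB3def, Set.mem_setOf_eq, not_or,
          not_le] at hmem
        obtain ⟨⟨h1, h2⟩, h3⟩ := hmem
        have hid : (∑ i, ((1-r)*(x i).1 + -s*(x i).2)^2)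
            = (∑ i, (x i).1^2) + (∑ i, (r*(x i).1+s*(x i).2)^2)
              - 2*(∑ i, (x i).1*(r*(x i).1+s*(x i).2)) := by
          rw [Finset.mul_sum, ← Finset.sum_add_distrib, ← Finset.sum_sub_distrib]
          exact Finset.sum_congr rfl fun i _ => by ring
        rw [hid] at h3
        obtain ⟨h1a, h1b⟩ := abs_lt.mp h1
        obtain ⟨h2a, h2b⟩ := abs_lt.mp h2
        obtain ⟨h3a, h3b⟩ := abs_lt.mp h3
        rcases le_abs.mp hx with h | h
        · linarith
        · linarith
      calc μ _ ≤ μ (B1 ∪ B2 ∪ B3) := measure_mono hsub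
        _ ≤ μ (B1 ∪ B2) + μ B3 := measure_union_le _ _
        _ ≤ (μ B1 + μ B2) + μ B3 := add_le_add_left (measure_union_le _ _) _
        _ ≤ (ENNReal.ofReal (2 * rexp (-(n:ℝ) * (ζ/2)^2 / 12)) +
              ENNReal.ofReal (2 * rexp (-(n:ℝ) * (ζ/2)^2 / 12))) +
              ENNReal.ofReal (2 * rexp (-(n:ℝ) * (ζ/(2-2*r))^2 / 12)) :=
            add_le_add (add_le_add hb1 hb2) hb3
        _ ≤ ENNReal.ofReal (Real.exp (-(n : ℝ) * ζ ^ 2 / 2048)) := by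
            rw [← ENNReal.ofReal_add (by positivity) (by positivity),
              ← ENNReal.ofReal_add (by positivity) (by positivity)]
            apply ENNReal.ofReal_le_ofReal
            have hε4 : ζ/4 ≤ ζ/(2-2*r) :=
              div_le_div_of_nonneg_left hζ0.le hwpos (by linarith)
            have he3 : 2 * rexp (-(n:ℝ) * (ζ/(2-2*r))^2 / 12) ≤
                2 * rexp (-((n:ℝ)*ζ^2)/192) := by
              have : -(n:ℝ) * (ζ/(2-2*r))^2 / 12 ≤ -((n:ℝ)*ζ^2)/192 := by
                have hn0 : (0:ℝ) ≤ n := Nat.cast_nonneg n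
                have hε2 : ζ^2/16 ≤ (ζ/(2-2*r))^2 := by
                  nlinarith [hε4, hζ0, div_pos hζ0 hwpos]
                have := mul_le_mul_of_nonneg_left hε2 hn0
                linarith
              linarith [Real.exp_le_exp.mpr this]
            have he1 : -(n:ℝ) * (ζ/2)^2 / 12 = -((n:ℝ)*ζ^2)/48 := by ring
            rw [he1]
            have := absorb3 hkey
            rw [show -(n:ℝ) * ζ^2 / 2048 = -((n:ℝ)*ζ^2)/2048 by ring]
            linarith
end

section
/- Let c > 0 with c² ≤ 1/5 and set β = √2·c. Let T be a directed tree on {1,…,d} with root r and parent map pa, and let P = N(0,Σ) be the centered Gaussian generated by the structural equation model X_r = η_r and X_k = β·X_{pa(k)} + η_k for k ≠ r, with independent noises η_k ~ N(0,1); equivalently Σ = (I−A)^{-1}(I−A)^{-⊤} where A_{k,pa(k)} = β are the only nonzero entries of A. Then: (1) P is c-strong tree-faithful to T; and (2) for every k ∈ {1,…,d}, 1 ≤ Σ_{kk} ≤ 1 + β²/(1−β²). -/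
open MeasureTheory ProbabilityTheory Matrix

section AuxTreeSEM
open Function


structure TreeSEM (d : ℕ) where
  r : Fin d
  f : Fin d → Fin d
  depth : Fin d → ℕ
  β : ℝ
  hβ : 0 < β
  hβ2 : β ^ 2 ≤ 2 / 5
  hiter : ∀ k, f^[depth k] k = r
  hmin : ∀ k n, f^[n] k = r → depth k ≤ n

namespace TreeSEM
variable {d : ℕ} (s : TreeSEM d)

lemma depth_r : s.depth s.r = 0 := Nat.le_zero.mp (s.hmin s.r 0 rfl)

lemma eq_r_of_depth_eq_zero {k : Fin d} (h : s.depth k = 0) : k = s.r := by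
  have := s.hiter k; rwa [h] at this

lemma depth_pos {k : Fin d} (h : k ≠ s.r) : 0 < s.depth k :=
  Nat.pos_of_ne_zero fun h0 => h (s.eq_r_of_depth_eq_zero h0)

lemma depth_f {k : Fin d} (h : k ≠ s.r) : s.depth k = s.depth (s.f k) + 1 := by
  have hpos := s.depth_pos h
  have h1 : s.f^[s.depth k - 1] (s.f k) = s.r := by
    rw [← iterate_succ_apply, Nat.succ_eq_add_one, Nat.sub_add_cancel hpos]
    exact s.hiter k
  have h2 : s.depth (s.f k) ≤ s.depth k - 1 := s.hmin _ _ h1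
  have h3 : s.depth k ≤ s.depth (s.f k) + 1 := by
    apply s.hmin
    rw [iterate_succ_apply]
    exact s.hiter (s.f k)
  omega

lemma iter_depth : ∀ (m : ℕ) (k : Fin d), m ≤ s.depth k → s.depth (s.f^[m] k) + m = s.depth k := by
  intro m
  induction m with
  | zero => intro k _; simp
  | succ n ih =>
    intro k hm
    have hk : k ≠ s.r := by
      intro h; subst h; rw [s.depth_r] at hm; omega
    have hd := s.depth_f hk
    rw [iterate_succ_apply]
    have : n ≤ s.depth (s.f k) := by omega
    have := ih (s.f k) this
    omega

end TreeSEM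

section Anc
variable {d : ℕ} (s : TreeSEM d)
namespace TreeSEM

/-- `y` is an ancestor-or-self of `x`. -/
def anc (x y : Fin d) : Prop :=
  s.depth y ≤ s.depth x ∧ s.f^[s.depth x - s.depth y] x = y

lemma anc_r (x : Fin d) : s.anc x s.r := by
  constructor
  · rw [s.depth_r]; exact Nat.zero_le _
  · rw [s.depth_r, Nat.sub_zero]; exact s.hiter x

lemma anc_rfl (x : Fin d) : s.anc x x := ⟨le_rfl, by simp⟩

lemma anc_of_iter {x y : Fin d} {m : ℕ} (h : s.f^[m] x = y) (hd : m + s.depth y = s.depth x) :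
    s.anc x y := by
  refine ⟨by omega, ?_⟩
  have : s.depth x - s.depth y = m := by omega
  rw [this]; exact h

lemma anc_iter {x y : Fin d} (h : s.anc x y) :
    s.f^[s.depth x - s.depth y] x = y ∧ (s.depth x - s.depth y) + s.depth y = s.depth x :=
  ⟨h.2, by have := h.1; omega⟩

lemma not_anc_of_depth_lt {x y : Fin d} (h : s.depth x < s.depth y) : ¬ s.anc x y :=
  fun hc => absurd hc.1 (by omega)

lemma anc_rec {k y : Fin d} (hk : k ≠ s.r) :
    s.anc k y ↔ (y = k ∨ s.anc (s.f k) y) := by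
  have hd := s.depth_f hk
  constructor
  · rintro ⟨h1, h2⟩
    rcases Nat.eq_or_lt_of_le h1 with heq | hlt
    · left
      have : s.depth k - s.depth y = 0 := by omega
      rw [this] at h2; exact h2.symm
    · right
      refine ⟨by omega, ?_⟩
      have he : s.depth k - s.depth y = (s.depth (s.f k) - s.depth y) + 1 := by omega
      rw [he, iterate_succ_apply] at h2
      exact h2
  · rintro (rfl | ⟨h1, h2⟩)
    · exact s.anc_rfl y
    · refine ⟨by omega, ?_⟩
      have he : s.depth k - s.depth y = (s.depth (s.f k) - s.depth y) + 1 := by omega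
      rw [he, iterate_succ_apply]
      exact h2

end TreeSEM
end Anc

namespace TreeSEM
variable {d : ℕ} (s : TreeSEM d)

open Classical in
/-- Explicit inverse of `1 - A`. -/
noncomputable def B : Matrix (Fin d) (Fin d) ℝ :=
  Matrix.of fun x y => if s.anc x y then s.β ^ (s.depth x - s.depth y) else 0

lemma B_of_anc {x y : Fin d} (h : s.anc x y) : s.B x y = s.β ^ (s.depth x - s.depth y) := by
  simp [B, h]

lemma B_of_not_anc {x y : Fin d} (h : ¬ s.anc x y) : s.B x y = 0 := by
  simp [B, h]

lemma B_self (x : Fin d) : s.B x x = 1 := by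
  rw [s.B_of_anc (s.anc_rfl x)]; simp

lemma B_r (y : Fin d) : s.B s.r y = if y = s.r then 1 else 0 := by
  by_cases h : y = s.r
  · subst h; simp [s.B_self]
  · rw [s.B_of_not_anc, if_neg h]
    rintro ⟨h1, _⟩
    rw [s.depth_r] at h1
    exact h (s.eq_r_of_depth_eq_zero (Nat.le_zero.mp h1))

lemma B_rec {k : Fin d} (hk : k ≠ s.r) (y : Fin d) :
    s.B k y = (if y = k then 1 else 0) + s.β * s.B (s.f k) y := by
  have hd := s.depth_f hk
  by_cases h : s.anc k y
  · rcases (s.anc_rec hk).mp h with rfl | h2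
    · rw [s.B_self, if_pos rfl, s.B_of_not_anc (s.not_anc_of_depth_lt (by omega))]
      ring
    · have hyk : y ≠ k := by
        intro heq; subst heq
        exact absurd h2.1 (by omega)
      rw [s.B_of_anc h, if_neg hyk, s.B_of_anc h2]
      have he : s.depth k - s.depth y = (s.depth (s.f k) - s.depth y) + 1 := by
        have := h2.1; omega
      rw [he, pow_succ]
      ring
  · have h2 : ¬ s.anc (s.f k) y := fun hc => h ((s.anc_rec hk).mpr (Or.inr hc))
    have hyk : y ≠ k := fun heq => h (heq ▸ s.anc_rfl k)
    rw [s.B_of_not_anc h, s.B_of_not_anc h2, if_neg hyk]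
    ring

/-- The covariance matrix. -/
noncomputable def Sg : Matrix (Fin d) (Fin d) ℝ := s.B * s.Bᵀ

lemma Sg_apply (x y : Fin d) : s.Sg x y = ∑ z, s.B x z * s.B y z := by
  simp [Sg, Matrix.mul_apply, Matrix.transpose_apply]

lemma Sg_symm (x y : Fin d) : s.Sg x y = s.Sg y x := by
  simp only [Sg_apply]
  exact Finset.sum_congr rfl fun z _ => mul_comm _ _

lemma Sg_rec {ℓ : Fin d} (hℓ : ℓ ≠ s.r) (x : Fin d) :
    s.Sg x ℓ = s.B x ℓ + s.β * s.Sg x (s.f ℓ) := by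
  simp only [Sg_apply]
  have : ∀ z : Fin d, s.B x z * s.B ℓ z
      = s.B x z * (if z = ℓ then 1 else 0) + s.β * (s.B x z * s.B (s.f ℓ) z) := by
    intro z
    rw [s.B_rec hℓ z]
    ring
  rw [Finset.sum_congr rfl fun z _ => this z, Finset.sum_add_distrib, ← Finset.mul_sum]
  congr 1
  simp [Finset.sum_ite_eq' Finset.univ ℓ]

lemma Sg_r_r : s.Sg s.r s.r = 1 := by
  rw [Sg_apply]
  have : ∀ z : Fin d, s.B s.r z * s.B s.r z = if z = s.r then 1 else 0 := by
    intro z; rw [s.B_r z]; by_cases h : z = s.r <;> simp [h]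
  rw [Finset.sum_congr rfl fun z _ => this z]
  simp

lemma Sg_diag_rec {ℓ : Fin d} (hℓ : ℓ ≠ s.r) :
    s.Sg ℓ ℓ = 1 + s.β ^ 2 * s.Sg (s.f ℓ) (s.f ℓ) := by
  have hd := s.depth_f hℓ
  have h1 : s.B (s.f ℓ) ℓ = 0 :=
    s.B_of_not_anc (s.not_anc_of_depth_lt (by omega))
  rw [s.Sg_rec hℓ ℓ, s.B_self, s.Sg_symm ℓ (s.f ℓ), s.Sg_rec hℓ (s.f ℓ), h1]
  ring

end TreeSEM

namespace TreeSEM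
variable {d : ℕ} (s : TreeSEM d)

noncomputable def g (n : ℕ) : ℝ := ∑ t ∈ Finset.range n, (s.β ^ 2) ^ t

lemma g_zero : s.g 0 = 0 := by simp [g]

lemma g_succ (n : ℕ) : s.g (n + 1) = 1 + s.β ^ 2 * s.g n := by
  unfold g
  rw [geom_sum_succ]
  rw [Finset.mul_sum]
  ring

lemma g_succ' (n : ℕ) : s.g (n + 1) = s.g n + (s.β ^ 2) ^ n := by
  simp [g, Finset.sum_range_succ]

lemma g_nonneg (n : ℕ) : 0 ≤ s.g n :=
  Finset.sum_nonneg fun t _ => pow_nonneg (sq_nonneg _) t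

lemma g_ge_one {n : ℕ} (h : 1 ≤ n) : 1 ≤ s.g n := by
  obtain ⟨m, rfl⟩ := Nat.exists_eq_add_of_le h
  rw [add_comm, g_succ]
  nlinarith [s.g_nonneg m, sq_nonneg s.β]

lemma g_rel (n : ℕ) : (1 - s.β ^ 2) * s.g n = 1 - (s.β ^ 2) ^ n := by
  have := geom_sum_mul (s.β ^ 2) n
  unfold g
  nlinarith [this]

/-- variance recursion along a chain. -/
lemma chainvar : ∀ (e : ℕ) (ℓ x : Fin d), s.f^[e] ℓ = x → e + s.depth x = s.depth ℓ →
    s.Sg ℓ ℓ = s.β ^ (2 * e) * s.Sg x x + s.g e := by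
  intro e
  induction e with
  | zero => intro ℓ x h _; simp at h; subst h; simp [s.g_zero]
  | succ n ih =>
    intro ℓ x h hd
    have hℓ : ℓ ≠ s.r := by
      intro hr; subst hr; rw [s.depth_r] at hd; omega
    have hdf := s.depth_f hℓ
    rw [iterate_succ_apply] at h
    have := ih (s.f ℓ) x h (by omega)
    rw [s.Sg_diag_rec hℓ, this, s.g_succ]
    ring

/-- `Sg x ℓ = β^e Sg x x` when `x` is the `e`-th ancestor of `ℓ`. -/
lemma fact2 : ∀ (e : ℕ) (ℓ x : Fin d), s.f^[e] ℓ = x → e + s.depth x = s.depth ℓ →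
    s.Sg x ℓ = s.β ^ e * s.Sg x x := by
  intro e
  induction e with
  | zero => intro ℓ x h _; simp at h; subst h; simp
  | succ n ih =>
    intro ℓ x h hd
    have hℓ : ℓ ≠ s.r := by
      intro hr; subst hr; rw [s.depth_r] at hd; omega
    have hdf := s.depth_f hℓ
    rw [iterate_succ_apply] at h
    have hB : s.B x ℓ = 0 := s.B_of_not_anc (s.not_anc_of_depth_lt (by omega))
    rw [s.Sg_rec hℓ x, hB, ih (s.f ℓ) x h (by omega), pow_succ]
    ring

/-- descend along `j`'s chain while below the meet. -/
lemma fact3 : ∀ (a : ℕ) (j ℓ : Fin d), (∀ i < a, ¬ s.anc ℓ (s.f^[i] j)) →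
    s.Sg j ℓ = s.β ^ a * s.Sg (s.f^[a] j) ℓ := by
  intro a
  induction a with
  | zero => intro j ℓ _; simp
  | succ n ih =>
    intro j ℓ hna
    have h0 : ¬ s.anc ℓ j := by simpa using hna 0 (Nat.succ_pos n)
    have hj : j ≠ s.r := fun hr => h0 (hr ▸ s.anc_r ℓ)
    have hB : s.B ℓ j = 0 := s.B_of_not_anc h0
    have step : s.Sg j ℓ = s.β * s.Sg (s.f j) ℓ := by
      rw [s.Sg_symm j ℓ, s.Sg_rec hj ℓ, hB, s.Sg_symm ℓ (s.f j)]
      ring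
    rw [step, ih (s.f j) ℓ (fun i hi => by
      have := hna (i + 1) (by omega)
      rwa [iterate_succ_apply] at this), ← iterate_succ_apply, pow_succ]
    ring

lemma var_eq (k : Fin d) : s.Sg k k = s.g (s.depth k + 1) := by
  have h := s.chainvar (s.depth k) k s.r (s.hiter k) (by rw [s.depth_r]; omega)
  rw [h, s.Sg_r_r, s.g_succ']
  rw [← pow_mul]
  ring

lemma var_ge_one (k : Fin d) : 1 ≤ s.Sg k k := by
  rw [s.var_eq]; exact s.g_ge_one (by omega)

lemma var_le (k : Fin d) : (1 - s.β ^ 2) * s.Sg k k ≤ 1 := by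
  rw [s.var_eq, s.g_rel]
  have : 0 ≤ (s.β ^ 2) ^ (s.depth k + 1) := pow_nonneg (sq_nonneg _) _
  linarith

end TreeSEM

lemma condMatrix_empty {d : ℕ} (S : Matrix (Fin d) (Fin d) ℝ) (x y : Fin d) :
    condMatrix S ∅ x y = S x y := by
  simp [condMatrix]

lemma condMatrix_singleton {d : ℕ} (S : Matrix (Fin d) (Fin d) ℝ) (ℓ x y : Fin d) :
    condMatrix S {ℓ} x y = S x y - S x ℓ * (S ℓ ℓ)⁻¹ * S ℓ y := by
  classical
  have hmem : ℓ ∈ ({ℓ} : Finset (Fin d)) := Finset.mem_singleton_self ℓ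
  letI hu : Unique ({ℓ} : Finset (Fin d)) :=
    ⟨⟨⟨ℓ, hmem⟩⟩, by rintro ⟨a, ha⟩; exact Subtype.ext (by simpa using ha)⟩
  have hdef : ((default : ({ℓ} : Finset (Fin d))) : Fin d) = ℓ := rfl
  have hinv : (Matrix.of fun p q : ({ℓ} : Finset (Fin d)) => S p q)⁻¹ default default
      = (S ℓ ℓ)⁻¹ := by
    rw [Matrix.inv_def, Matrix.adjugate_subsingleton, Matrix.det_unique]
    simp [Matrix.smul_apply, Matrix.one_apply, Ring.inverse_eq_inv]
  unfold condMatrix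
  rw [Fintype.sum_unique, Fintype.sum_unique, hinv]
  rfl

lemma pcorr_empty {d : ℕ} (S : Matrix (Fin d) (Fin d) ℝ) (j k : Fin d) :
    pcorr S j k ∅ = S j k / Real.sqrt (S j j * S k k) := by
  simp [pcorr, condMatrix_empty]

lemma pcorr_singleton {d : ℕ} (S : Matrix (Fin d) (Fin d) ℝ) (ℓ j k : Fin d) :
    pcorr S j k {ℓ} = (S j k - S j ℓ * (S ℓ ℓ)⁻¹ * S ℓ k) /
      Real.sqrt ((S j j - S j ℓ * (S ℓ ℓ)⁻¹ * S ℓ j) *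
        (S k k - S k ℓ * (S ℓ ℓ)⁻¹ * S ℓ k)) := by
  simp [pcorr, condMatrix_singleton]

lemma pcorr_empty_symm {d : ℕ} (S : Matrix (Fin d) (Fin d) ℝ)
    (hs : ∀ x y, S x y = S y x) (j k : Fin d) :
    pcorr S j k ∅ = pcorr S k j ∅ := by
  rw [pcorr_empty, pcorr_empty, hs j k, mul_comm (S j j)]

lemma pcorr_single_symm {d : ℕ} (S : Matrix (Fin d) (Fin d) ℝ)
    (hs : ∀ x y, S x y = S y x) (ℓ j k : Fin d) :
    pcorr S j k {ℓ} = pcorr S k j {ℓ} := by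
  rw [pcorr_singleton, pcorr_singleton]
  have h1 : S j k - S j ℓ * (S ℓ ℓ)⁻¹ * S ℓ k = S k j - S k ℓ * (S ℓ ℓ)⁻¹ * S ℓ j := by
    rw [hs j k, hs j ℓ, hs k ℓ]; ring
  rw [h1, mul_comm (S j j - _)]

lemma pos_of_mul_eq {L x y : ℝ} (hL : 0 < L) (h : L * x = y) (hy : 0 < y) : 0 < x := by
  by_contra hx
  push_neg at hx
  nlinarith

lemma div_sqrt_ge {c n e1 e2 : ℝ} (hc : 0 ≤ c) (he1 : 0 < e1) (he2 : 0 < e2)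
    (hn : 0 ≤ n) (h : c ^ 2 * (e1 * e2) ≤ n ^ 2) : c ≤ n / Real.sqrt (e1 * e2) := by
  rw [le_div_iff₀ (Real.sqrt_pos.2 (mul_pos he1 he2))]
  have h1 : c * Real.sqrt (e1 * e2) = Real.sqrt (c ^ 2 * (e1 * e2)) := by
    rw [Real.sqrt_mul (sq_nonneg c), Real.sqrt_sq hc]
  rw [h1]
  calc Real.sqrt (c ^ 2 * (e1 * e2)) ≤ Real.sqrt (n ^ 2) := Real.sqrt_le_sqrt h
    _ = n := Real.sqrt_sq hn

lemma pcorr_core {c L n0 e1 e2 N D1 D2 : ℝ} (hc : 0 ≤ c) (hL0 : 0 < L)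
    (hN : L * n0 = N) (hD1 : L * e1 = D1) (hD2 : L * e2 = D2)
    (hN0 : 0 ≤ N) (hD1p : 0 < D1) (hD2p : 0 < D2)
    (hineq : c ^ 2 * (D1 * D2) ≤ N ^ 2) : c ≤ n0 / Real.sqrt (e1 * e2) := by
  have he1 : 0 < e1 := pos_of_mul_eq hL0 hD1 hD1p
  have he2 : 0 < e2 := pos_of_mul_eq hL0 hD2 hD2p
  have hn : 0 ≤ n0 := by
    by_contra hneg
    push_neg at hneg
    nlinarith
  apply div_sqrt_ge hc he1 he2 hn
  have h2 : L ^ 2 * (c ^ 2 * (e1 * e2)) ≤ L ^ 2 * n0 ^ 2 := by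
    calc L ^ 2 * (c ^ 2 * (e1 * e2)) = c ^ 2 * ((L * e1) * (L * e2)) := by ring
      _ = c ^ 2 * (D1 * D2) := by rw [hD1, hD2]
      _ ≤ N ^ 2 := hineq
      _ = (L * n0) ^ 2 := by rw [hN]
      _ = L ^ 2 * n0 ^ 2 := by ring
  exact le_of_mul_le_mul_left h2 (by positivity)

namespace TreeSEM
variable {d : ℕ} (s : TreeSEM d)

noncomputable def Am : Matrix (Fin d) (Fin d) ℝ :=
  Matrix.of fun k j => if j = s.f k ∧ k ≠ s.r then s.β else 0

lemma one_sub_mul_B : (1 - s.Am) * s.B = 1 := by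
  ext k y
  rw [Matrix.sub_mul, Matrix.one_mul, Matrix.sub_apply, Matrix.mul_apply]
  by_cases hk : k = s.r
  · subst hk
    have h0 : ∀ z : Fin d, s.Am s.r z * s.B z y = 0 := by
      intro z; simp [Am]
    rw [Finset.sum_congr rfl fun z _ => h0 z]
    simp [s.B_r y, Matrix.one_apply, eq_comm]
  · have hsum : ∑ z, s.Am k z * s.B z y = s.β * s.B (s.f k) y := by
      rw [Finset.sum_eq_single (s.f k)]
      · simp [Am, hk]
      · intro z _ hz; simp [Am, hz, hk]
      · intro h; exact absurd (Finset.mem_univ _) h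
    rw [hsum, s.B_rec hk y, Matrix.one_apply]
    by_cases hy : k = y
    · rw [if_pos hy, if_pos hy.symm]; ring
    · rw [if_neg hy, if_neg (Ne.symm hy)]; ring

set_option maxHeartbeats 2000000 in
lemma edge_faithful (c : ℝ) (hc : 0 < c) (hβc : s.β = Real.sqrt 2 * c)
    {j k : Fin d} (hk : k ≠ s.r) (hfk : s.f k = j) :
    c ≤ pcorr s.Sg j k ∅ ∧ ∀ ℓ, ℓ ≠ j → ℓ ≠ k → c ≤ pcorr s.Sg j k {ℓ} := by
  have hu0 : 0 < s.β ^ 2 := pow_pos s.hβ 2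
  have hu2 := s.hβ2
  have hc2 : c ^ 2 = s.β ^ 2 / 2 := by
    rw [hβc, mul_pow, Real.sq_sqrt (by norm_num : (0:ℝ) ≤ 2)]; ring
  have hdk : s.depth k = s.depth j + 1 := by rw [← hfk]; exact s.depth_f hk
  have hjk : s.Sg j k = s.β * s.Sg j j := by
    have := s.fact2 1 k j (by simpa using hfk) (by omega)
    simpa using this
  have hK : s.Sg k k = 1 + s.β ^ 2 * s.Sg j j := by
    rw [s.Sg_diag_rec hk, hfk]
  have hv1 : 1 ≤ s.Sg j j := s.var_ge_one j
  have hv0 : (0:ℝ) < s.Sg j j := by linarith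
  constructor
  · rw [pcorr_empty, hjk]
    apply div_sqrt_ge hc.le hv0 (by nlinarith) (mul_nonneg s.hβ.le hv0.le)
    rw [hc2, hK]
    nlinarith [mul_pos hu0 hv0, mul_pos (mul_pos hu0 hv0) hv0,
      mul_nonneg (mul_nonneg hu0.le hv0.le) (by nlinarith : (0:ℝ) ≤ s.Sg j j * (2 - s.β^2) - 1)]
  · intro ℓ hlj hlk
    rw [pcorr_singleton]
    have hL1 : 1 ≤ s.Sg ℓ ℓ := s.var_ge_one ℓ
    have hL0 : (0:ℝ) < s.Sg ℓ ℓ := by linarith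
    have expand : ∀ x p q : ℝ,
        s.Sg ℓ ℓ * (x - p * (s.Sg ℓ ℓ)⁻¹ * q) = s.Sg ℓ ℓ * x - p * q := by
      intro x p q
      field_simp
    by_cases hanc : s.anc ℓ k
    · -- Case A : k is an ancestor of ℓ
      obtain ⟨hdle, hfe⟩ := hanc
      have hek : (s.depth ℓ - s.depth k) + s.depth k = s.depth ℓ := by omega
      set e := s.depth ℓ - s.depth k with he_def
      have he1 : 1 ≤ e := by
        rcases Nat.eq_zero_or_pos e with h0 | h; swap
        · omega
        · rw [h0] at hfe; simp at hfe; exact absurd hfe hlk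
      have hkl : s.Sg k ℓ = s.β ^ e * s.Sg k k := s.fact2 e ℓ k hfe hek
      have hjl : s.Sg j ℓ = s.β ^ (e + 1) * s.Sg j j :=
        s.fact2 (e + 1) ℓ j (by rw [iterate_succ_apply', hfe, hfk]) (by omega)
      have hll : s.Sg ℓ ℓ = s.β ^ (2 * e) * s.Sg k k + s.g e := s.chainvar e ℓ k hfe hek
      have hsk : s.Sg ℓ k = s.β ^ e * s.Sg k k := by rw [s.Sg_symm]; exact hkl
      have hsj : s.Sg ℓ j = s.β ^ (e + 1) * s.Sg j j := by rw [s.Sg_symm]; exact hjl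
      have hge1 : 1 ≤ s.g e := s.g_ge_one he1
      have hge1' : 1 ≤ s.g (e + 1) := s.g_ge_one (by omega)
      have hK1 : (1:ℝ) ≤ s.Sg k k := s.var_ge_one k
      apply pcorr_core hc.le hL0
        (N := s.β * s.Sg j j * s.g e)
        (D1 := s.Sg j j * s.g (e + 1)) (D2 := s.Sg k k * s.g e)
      · rw [expand, hjk, hjl, hsk, hll]; ring
      · rw [expand, hjl, hsj, hll, hK, s.g_succ' e, pow_mul]; ring
      · rw [expand, hkl, hsk, hll]; ring
      · exact mul_nonneg (mul_nonneg s.hβ.le hv0.le) (by linarith)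
      · exact mul_pos hv0 (by linarith)
      · exact mul_pos (by linarith : (0:ℝ) < s.Sg k k) (by linarith)
      · -- main case-A inequality
        rw [hc2, hK, s.g_succ e]
        have key : (1 + s.β ^ 2 * s.g e) * (1 + s.β ^ 2 * s.Sg j j)
            ≤ 2 * (s.Sg j j * s.g e) := by
          have ha : 0 ≤ s.Sg j j - 1 := by linarith
          have hb : 0 ≤ s.g e - 1 := by linarith
          have h25 : 0 ≤ 2 / 5 - s.β ^ 2 := by linarith
          nlinarith [mul_nonneg ha hb, mul_nonneg hu0.le h25,
            mul_nonneg (mul_nonneg ha hb) (mul_nonneg hu0.le h25),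
            mul_nonneg ha (mul_nonneg hu0.le h25), mul_nonneg hb (mul_nonneg hu0.le h25),
            mul_nonneg ha h25, mul_nonneg hb h25, mul_nonneg (mul_nonneg ha hb) h25]
        nlinarith [mul_nonneg (mul_nonneg (mul_nonneg hu0.le hv0.le)
          (by linarith : (0:ℝ) ≤ s.g e)) (sub_nonneg.2 key)]
    · -- Case B : k is not an ancestor of ℓ
      classical
      have hex : ∃ i, s.anc ℓ (s.f^[i] j) :=
        ⟨s.depth j, by rw [s.hiter j]; exact s.anc_r ℓ⟩
      obtain ⟨a, haQ, hamin, hale⟩ : ∃ a, s.anc ℓ (s.f^[a] j) ∧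
          (∀ i, i < a → ¬ s.anc ℓ (s.f^[i] j)) ∧ a ≤ s.depth j :=
        ⟨Nat.find hex, Nat.find_spec hex, fun i hi => Nat.find_min hex hi,
          Nat.find_min' hex (by rw [s.hiter j]; exact s.anc_r ℓ)⟩
      set m := s.f^[a] j with hm_def
      have hadm : s.depth m + a = s.depth j := s.iter_depth a j hale
      obtain ⟨hble, hbf⟩ := haQ
      set b := s.depth ℓ - s.depth m with hb_def
      have hbd : b + s.depth m = s.depth ℓ := by omega
      have hml : s.Sg m ℓ = s.β ^ b * s.Sg m m := s.fact2 b ℓ m hbf hbd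
      have hjl : s.Sg j ℓ = s.β ^ (a + b) * s.Sg m m := by
        rw [s.fact3 a j ℓ hamin, ← hm_def, hml, pow_add]; ring
      have hkl : s.Sg k ℓ = s.β ^ (a + 1 + b) * s.Sg m m := by
        have hmin' : ∀ i, i < a + 1 → ¬ s.anc ℓ (s.f^[i] k) := by
          intro i hi
          cases i with
          | zero => simpa using hanc
          | succ n =>
            rw [iterate_succ_apply, hfk]
            exact hamin n (by omega)
        have h3 := s.fact3 (a + 1) k ℓ hmin'
        rw [h3, iterate_succ_apply, hfk, ← hm_def, hml, pow_add, pow_add]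
        ring
      have hvv : s.Sg j j = s.β ^ (2 * a) * s.Sg m m + s.g a :=
        s.chainvar a j m hm_def.symm (by omega)
      have hll : s.Sg ℓ ℓ = s.β ^ (2 * b) * s.Sg m m + s.g b := s.chainvar b ℓ m hbf hbd
      have hS1 : 1 ≤ s.Sg m m := s.var_ge_one m
      have hS2 : (1 - s.β ^ 2) * s.Sg m m ≤ 1 := s.var_le m
      have hsk : s.Sg ℓ k = s.β ^ (a + 1 + b) * s.Sg m m := by rw [s.Sg_symm]; exact hkl
      have hsj : s.Sg ℓ j = s.β ^ (a + b) * s.Sg m m := by rw [s.Sg_symm]; exact hjl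
      have hab : ¬ (a = 0 ∧ b = 0) := by
        rintro ⟨h1, h2⟩
        apply hlj
        have hmj : m = j := by rw [hm_def, h1]; simp
        have : s.f^[b] ℓ = m := hbf
        rw [h2] at this
        simp at this
        rw [this, hmj]
      obtain ⟨D1v, hD1v_def⟩ : ∃ x : ℝ, x = s.β ^ (2 * a) * s.Sg m m * s.g b
          + s.β ^ (2 * b) * s.Sg m m * s.g a + s.g a * s.g b := ⟨_, rfl⟩
      have hga0 : 0 ≤ s.g a := s.g_nonneg a
      have hgb0 : 0 ≤ s.g b := s.g_nonneg b
      have hx0 : (0:ℝ) < s.β ^ (2 * a) := pow_pos s.hβ _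
      have hy0 : (0:ℝ) < s.β ^ (2 * b) := pow_pos s.hβ _
      have hD1vp : 0 < D1v := by
        rcases Nat.eq_zero_or_pos a with h0 | hpos
        · have hb1 : 1 ≤ b := by omega
          have : 1 ≤ s.g b := s.g_ge_one hb1
          rw [hD1v_def, h0, s.g_zero]
          have h1 : s.β ^ (2 * 0) = 1 := by norm_num
          rw [h1]
          nlinarith [mul_nonneg (mul_nonneg hy0.le (by linarith : (0:ℝ) ≤ s.Sg m m)) hga0]
        · have hga1 : 1 ≤ s.g a := s.g_ge_one hpos
          rw [hD1v_def]
          nlinarith [mul_pos (mul_pos hy0 (by linarith : (0:ℝ) < s.Sg m m))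
            (by linarith : (0:ℝ) < s.g a),
            mul_nonneg (mul_nonneg hx0.le (by linarith : (0:ℝ) ≤ s.Sg m m)) hgb0,
            mul_nonneg hga0 hgb0]
      have hmain : s.Sg ℓ ℓ + s.β ^ 2 * D1v ≤ 2 * D1v := by
        rw [hll, hD1v_def]
        rcases Nat.eq_zero_or_pos a with h0 | hpos
        · have hb1 : 1 ≤ b := by omega
          have hgb1 : 1 ≤ s.g b := s.g_ge_one hb1
          have hy : (1 - s.β ^ 2) * s.g b = 1 - s.β ^ (2 * b) := by
            rw [pow_mul]; exact s.g_rel b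
          rw [h0, s.g_zero]
          have h1 : s.β ^ (2 * 0) = 1 := by norm_num
          rw [h1]
          have h2 : 0 ≤ (3 - 2 * s.β ^ 2) * s.g b - 1 := by nlinarith
          nlinarith [mul_nonneg (sub_nonneg.2 hS1) h2]
        · have hga1 : 1 ≤ s.g a := s.g_ge_one hpos
          have hS0 : (0:ℝ) < s.Sg m m := by linarith
          have h2 : 0 ≤ (2 - s.β ^ 2) * s.g a - 1 := by nlinarith
          nlinarith [mul_nonneg (mul_nonneg hy0.le hS0.le) h2, mul_nonneg hgb0 h2,
            mul_nonneg (mul_nonneg (mul_nonneg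
              (by linarith : (0:ℝ) ≤ 2 - s.β ^ 2) hx0.le) hS0.le) hgb0]
      apply pcorr_core hc.le hL0
        (N := s.β * D1v) (D1 := D1v) (D2 := s.Sg ℓ ℓ + s.β ^ 2 * D1v)
      · rw [expand, hjk, hjl, hsk, hll, hvv, hD1v_def]; ring
      · rw [expand, hjl, hsj, hll, hvv, hD1v_def]; ring
      · rw [expand, hkl, hsk, hK, hll, hvv, hD1v_def]; ring
      · exact mul_nonneg s.hβ.le hD1vp.le
      · exact hD1vp
      · nlinarith [mul_pos hu0 hD1vp]
      · rw [hc2]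
        nlinarith [mul_nonneg (mul_nonneg hu0.le hD1vp.le) (sub_nonneg.2 hmain)]

end TreeSEM

lemma walk_trans {V : Type*} {G : SimpleGraph V} (P : V → Prop)
    (hstep : ∀ x y, G.Adj x y → P y → P x) :
    ∀ x y, G.Walk x y → P y → P x := by
  intro x y w
  induction w with
  | nil => exact id
  | cons h p ih => exact fun hy => hstep _ _ h (ih hy)

end AuxTreeSEM

/-- For the directed-tree SEM with all edge weights `β = √2·c` (with
`c² ≤ 1/5`) and unit noise variances, the resulting Gaussian is `c`-strong
tree-faithful and all marginal variances lie in `[1, 1 + β²/(1−β²)]`. -/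
theorem stmt_17 (c : ℝ) (hc : 0 < c) (hc2 : c ^ 2 ≤ 1 / 5)
    (d : ℕ) (E : Fin d → Fin d → Prop) (hE : IsDirectedTree E)
    (A : Matrix (Fin d) (Fin d) ℝ)
    (hA1 : ∀ k j, E j k → A k j = Real.sqrt 2 * c)
    (hA0 : ∀ k j, ¬ E j k → A k j = 0) :
    StrongTreeFaithful c ((1 - A)⁻¹ * ((1 - A)⁻¹)ᵀ) E ∧
    ∀ k, 1 ≤ (((1 - A)⁻¹ * ((1 - A)⁻¹)ᵀ : Matrix (Fin d) (Fin d) ℝ)) k k ∧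
      (((1 - A)⁻¹ * ((1 - A)⁻¹)ᵀ : Matrix (Fin d) (Fin d) ℝ)) k k ≤
        1 + (Real.sqrt 2 * c) ^ 2 / (1 - (Real.sqrt 2 * c) ^ 2) := by
  classical
  obtain ⟨⟨hloop, h2cyc, htree⟩, r, hroot, huniq⟩ := hE
  set f : Fin d → Fin d := fun k => if h : k = r then r else (huniq k h).choose
    with hf_def
  have hfE : ∀ k, k ≠ r → E (f k) k := by
    intro k hk
    simp only [hf_def, dif_neg hk]
    exact (huniq k hk).choose_spec.1
  have hfuniq : ∀ j k, E j k → k ≠ r ∧ f k = j := by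
    intro j k hEjk
    have hk : k ≠ r := fun h => hroot j (h ▸ hEjk)
    refine ⟨hk, ?_⟩
    simp only [hf_def, dif_neg hk]
    exact ((huniq k hk).choose_spec.2 j hEjk).symm
  have hstep : ∀ x y : Fin d, (skeleton E).Adj x y →
      (∃ n, f^[n] y = r) → ∃ n, f^[n] x = r := by
    rintro x y ⟨hxy, hor⟩ ⟨n, hn⟩
    rcases hor with hExy | hEyx
    · obtain ⟨hyr, hfy⟩ := hfuniq x y hExy
      cases n with
      | zero => simp at hn; exact absurd hn hyr
      | succ n =>
        rw [Function.iterate_succ_apply, hfy] at hn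
        exact ⟨n, hn⟩
    · obtain ⟨hxr, hfx⟩ := hfuniq y x hEyx
      exact ⟨n + 1, by rw [Function.iterate_succ_apply, hfx]; exact hn⟩
  have hreach : ∀ k : Fin d, ∃ n, f^[n] k = r := fun k =>
    walk_trans (fun x => ∃ n, f^[n] x = r) hstep k r
      (htree.isConnected.preconnected k r).some ⟨0, rfl⟩
  set s : TreeSEM d :=
    { r := r
      f := f
      depth := fun k => Nat.find (hreach k)
      β := Real.sqrt 2 * c
      hβ := mul_pos (Real.sqrt_pos.2 two_pos) hc
      hβ2 := by
        rw [mul_pow, Real.sq_sqrt (by norm_num : (0:ℝ) ≤ 2)]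
        linarith
      hiter := fun k => Nat.find_spec (hreach k)
      hmin := fun k n h => Nat.find_min' (hreach k) h } with hs_def
  have hAeq : A = s.Am := by
    ext k z
    by_cases hE' : E z k
    · obtain ⟨hk, hfk⟩ := hfuniq z k hE'
      rw [hA1 k z hE']
      simp only [TreeSEM.Am, Matrix.of_apply]
      rw [if_pos ⟨hfk.symm, hk⟩]
    · rw [hA0 k z hE']
      simp only [TreeSEM.Am, Matrix.of_apply]
      rw [if_neg]
      rintro ⟨h1, h2⟩
      exact hE' (by rw [h1]; exact hfE k h2)
  have hBinv : (1 - A)⁻¹ = s.B := by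
    rw [hAeq]; exact Matrix.inv_eq_right_inv s.one_sub_mul_B
  have hSg : (1 - A)⁻¹ * ((1 - A)⁻¹)ᵀ = s.Sg := by rw [hBinv]; rfl
  rw [hSg]
  constructor
  · constructor
    · rintro j k ⟨hne, hor⟩
      rcases hor with h | h
      · obtain ⟨hk, hfk⟩ := hfuniq j k h
        exact s.edge_faithful c hc rfl hk hfk
      · obtain ⟨hj, hfj⟩ := hfuniq k j h
        have H := s.edge_faithful c hc rfl hj hfj
        constructor
        · rw [pcorr_empty_symm s.Sg s.Sg_symm]
          exact H.1
        · intro ℓ h1 h2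
          rw [pcorr_single_symm s.Sg s.Sg_symm]
          exact H.2 ℓ h2 h1
    · rintro j ℓ k hEjl hEkl hjk _
      obtain ⟨-, h1⟩ := hfuniq j ℓ hEjl
      obtain ⟨-, h2⟩ := hfuniq k ℓ hEkl
      exact absurd (h1.symm.trans h2) hjk
  · intro k
    have h1 : 1 ≤ s.Sg k k := s.var_ge_one k
    have h2 : (1 - (Real.sqrt 2 * c) ^ 2) * s.Sg k k ≤ 1 := s.var_le k
    have hu2 : (Real.sqrt 2 * c) ^ 2 ≤ 2 / 5 := by
      rw [mul_pow, Real.sq_sqrt (by norm_num : (0:ℝ) ≤ 2)]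
      linarith
    refine ⟨h1, ?_⟩
    have h1u : 0 < 1 - (Real.sqrt 2 * c) ^ 2 := by linarith
    calc s.Sg k k ≤ 1 / (1 - (Real.sqrt 2 * c) ^ 2) := by
          rw [le_div_iff₀ h1u]; linarith
      _ = 1 + (Real.sqrt 2 * c) ^ 2 / (1 - (Real.sqrt 2 * c) ^ 2) := by
          rw [one_add_div h1u.ne']; ring
end

section
/- Let (X,Y) be a centered bivariate Gaussian with Var(X) = σ_x², Var(Y) = σ_y², Cov(X,Y) = ρ, and positive definite covariance matrix, and set Δ = σ_x²σ_y² − ρ². Then for every real s with σ_x²σ_y² > (ρ + sΔ)² (equivalently, 1 − 2ρs − s²Δ > 0), one has E[exp(s·X·Y)] = 1/sqrt(1 − 2ρs − s²Δ). -/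
open MeasureTheory ProbabilityTheory Matrix

open Real in
private lemma gauss2_integrable {p q r : ℝ} (hp : 0 < p) (hq : 0 < q) (hd : r^2 < 4*p*q) :
    Integrable (fun z : ℝ × ℝ => Real.exp (-(p*z.1^2) + r*z.1*z.2 - q*z.2^2)) := by
  obtain ⟨ε, hε, hεp, hεq, hεd⟩ :
      ∃ ε : ℝ, 0 < ε ∧ ε < p ∧ ε < q ∧ r^2 ≤ 4*(p-ε)*(q-ε) := by
    have hpq : 0 < p + q := by linarith
    set c := (4*p*q - r^2)/(8*(p+q)) with hc
    have hc8 : c * (8*(p+q)) = 4*p*q - r^2 := by rw [hc]; field_simp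
    have hcpos : 0 < c := by rw [hc]; exact div_pos (by linarith) (by linarith)
    refine ⟨min (min p q / 2) c, ?_, ?_, ?_, ?_⟩
    · exact lt_min (by positivity) hcpos
    · calc min (min p q / 2) c ≤ min p q / 2 := min_le_left _ _
        _ < p := by have h1 := min_le_left p q; have h2 : (0:ℝ) < min p q := lt_min hp hq; linarith
    · calc min (min p q / 2) c ≤ min p q / 2 := min_le_left _ _
        _ < q := by have h1 := min_le_right p q; have h2 : (0:ℝ) < min p q := lt_min hp hq; linarith
    · have h1 : min (min p q / 2) c ≤ c := min_le_right _ _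
      have h0 : 0 < min (min p q / 2) c := by positivity
      nlinarith [mul_pos hpq h0, sq_nonneg (min (min p q / 2) c)]
  have hbound : ∀ z : ℝ × ℝ,
      ‖Real.exp (-(p*z.1^2) + r*z.1*z.2 - q*z.2^2)‖ ≤ ‖Real.exp (-ε*z.1^2) * Real.exp (-ε*z.2^2)‖ := by
    intro z
    rw [Real.norm_eq_abs, Real.norm_eq_abs, Real.abs_exp, abs_of_pos (by positivity), ← Real.exp_add]
    apply Real.exp_le_exp.2
    nlinarith [sq_nonneg (2*(p-ε)*z.1 - r*z.2), sq_nonneg z.2, mul_pos (sub_pos.2 hεp) (sub_pos.2 hεq)]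
  have hg : Integrable (fun z : ℝ × ℝ => Real.exp (-ε*z.1^2) * Real.exp (-ε*z.2^2)) := by
    rw [Measure.volume_eq_prod]
    exact (integrable_exp_neg_mul_sq hε).mul_prod (integrable_exp_neg_mul_sq hε)
  exact hg.mono (Continuous.aestronglyMeasurable (by fun_prop)) (ae_of_all _ hbound)

open Real in
private lemma gauss2 {p q r : ℝ} (hp : 0 < p) (hq : 0 < q) (hd : r^2 < 4*p*q) :
    ∫ z : ℝ × ℝ, Real.exp (-(p*z.1^2) + r*z.1*z.2 - q*z.2^2)
      = π / Real.sqrt (p*q - r^2/4) := by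
  have hp' : 0 < p - r^2/(4*q) := by
    rw [sub_pos, div_lt_iff₀ (by positivity)]
    nlinarith
  rw [Measure.volume_eq_prod, integral_prod _ (by rw [← Measure.volume_eq_prod]; exact gauss2_integrable hp hq hd)]
  have inner : ∀ x : ℝ, (∫ y : ℝ, Real.exp (-(p*x^2) + r*x*y - q*y^2))
      = Real.exp (-(p - r^2/(4*q))*x^2) * Real.sqrt (π/q) := by
    intro x
    have heq : ∀ y : ℝ, Real.exp (-(p*x^2) + r*x*y - q*y^2)
        = Real.exp (-(p - r^2/(4*q))*x^2) * Real.exp (-q*(y - r*x/(2*q))^2) := by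
      intro y
      rw [← Real.exp_add]
      congr 1
      field_simp
      ring
    simp_rw [heq]
    rw [integral_const_mul]
    rw [integral_sub_right_eq_self (fun y => Real.exp (-q*y^2)) (r*x/(2*q))]
    rw [integral_gaussian]
  simp_rw [inner]
  rw [integral_mul_const, integral_gaussian]
  rw [← Real.sqrt_mul (by positivity)]
  have h2 : (π/(p - r^2/(4*q))) * (π/q) = π^2/(p*q - r^2/4) := by
    rw [div_mul_div_comm]
    congr 1
    · ring
    · field_simp
  rw [h2, Real.sqrt_div (sq_nonneg π), Real.sqrt_sq Real.pi_nonneg]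

open Real
open scoped ENNReal NNReal

/-- Moment generating function of the product of the coordinates of a centered
bivariate Gaussian: `E[exp(s·X·Y)] = 1/√(1 − 2ρs − s²Δ)` where
`Δ = σ_x²σ_y² − ρ²`. -/
theorem stmt_19 (σx σy ρ s : ℝ)
    (hpd : (!![σx ^ 2, ρ; ρ, σy ^ 2] : Matrix (Fin 2) (Fin 2) ℝ).PosDef)
    (hs : (ρ + s * (σx ^ 2 * σy ^ 2 - ρ ^ 2)) ^ 2 < σx ^ 2 * σy ^ 2) :
    ∫ x, Real.exp (s * x 0 * x 1)
        ∂(gaussianOfCov (!![σx ^ 2, ρ; ρ, σy ^ 2] : Matrix (Fin 2) (Fin 2) ℝ)) =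
      1 / Real.sqrt (1 - 2 * ρ * s - s ^ 2 * (σx ^ 2 * σy ^ 2 - ρ ^ 2)) := by
  have hdet : (!![σx ^ 2, ρ; ρ, σy ^ 2] : Matrix (Fin 2) (Fin 2) ℝ).det
      = σx^2*σy^2 - ρ^2 := by rw [Matrix.det_fin_two_of]; ring
  have hD : 0 < σx^2*σy^2 - ρ^2 := hdet ▸ hpd.det_pos
  have hDne : σx^2*σy^2 - ρ^2 ≠ 0 := ne_of_gt hD
  have ha : 0 < σx^2 := by nlinarith [sq_nonneg ρ, sq_nonneg σx, sq_nonneg σy, sq_nonneg (σx*σy)]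
  have hb : 0 < σy^2 := by nlinarith [sq_nonneg ρ, sq_nonneg σx, sq_nonneg σy, sq_nonneg (σx*σy)]
  have hK : 0 < 1 - 2*ρ*s - s^2*(σx^2*σy^2 - ρ^2) := by nlinarith [hs, hD]
  have hKne : 1 - 2*ρ*s - s^2*(σx^2*σy^2 - ρ^2) ≠ 0 := ne_of_gt hK
  have hinv : (!![σx ^ 2, ρ; ρ, σy ^ 2] : Matrix (Fin 2) (Fin 2) ℝ)⁻¹
      = (σx^2*σy^2 - ρ^2)⁻¹ • !![σy^2, -ρ; -ρ, σx^2] := by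
    rw [Matrix.inv_def, Matrix.adjugate_fin_two_of, hdet, Ring.inverse_eq_inv']
  have hquad : ∀ x : Fin 2 → ℝ,
      x ⬝ᵥ ((!![σx ^ 2, ρ; ρ, σy ^ 2] : Matrix (Fin 2) (Fin 2) ℝ)⁻¹ *ᵥ x)
      = (σx^2*σy^2 - ρ^2)⁻¹ * (σy^2*(x 0)^2 - 2*ρ*(x 0)*(x 1) + σx^2*(x 1)^2) := by
    intro x
    rw [hinv]
    simp [dotProduct, Matrix.mulVec, Fin.sum_univ_two, Matrix.smul_apply]
    ring
  have hppos : 0 < σy^2 / (2*(σx^2*σy^2 - ρ^2)) := by positivity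
  have hqpos : 0 < σx^2 / (2*(σx^2*σy^2 - ρ^2)) := by positivity
  have hdisc : (ρ/(σx^2*σy^2 - ρ^2) + s)^2
      < 4*(σy^2 / (2*(σx^2*σy^2 - ρ^2)))*(σx^2 / (2*(σx^2*σy^2 - ρ^2))) := by
    have h1 : ρ/(σx^2*σy^2 - ρ^2) + s
        = (ρ + s*(σx^2*σy^2 - ρ^2))/(σx^2*σy^2 - ρ^2) := by field_simp
    have h2 : 4*(σy^2 / (2*(σx^2*σy^2 - ρ^2)))*(σx^2 / (2*(σx^2*σy^2 - ρ^2)))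
        = (σx^2*σy^2)/(σx^2*σy^2 - ρ^2)^2 := by field_simp; ring
    rw [h1, h2, div_pow]
    exact div_lt_div_of_pos_right hs (by positivity)
  have hCpos : (0:ℝ) < (2*π)^2*(σx^2*σy^2 - ρ^2) := by positivity
  have step1 : ∫ x, Real.exp (s * x 0 * x 1)
        ∂(gaussianOfCov (!![σx ^ 2, ρ; ρ, σy ^ 2] : Matrix (Fin 2) (Fin 2) ℝ))
      = ∫ x : Fin 2 → ℝ, (Real.sqrt ((2*π)^2*(σx^2*σy^2 - ρ^2)))⁻¹ *
          Real.exp (-((σy^2 / (2*(σx^2*σy^2 - ρ^2)))*(x 0)^2)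
            + (ρ/(σx^2*σy^2 - ρ^2) + s)*(x 0)*(x 1)
            - (σx^2 / (2*(σx^2*σy^2 - ρ^2)))*(x 1)^2) := by
    rw [gaussianOfCov]
    have hmeas : Measurable fun x : Fin 2 → ℝ =>
        ((Real.sqrt ((2 * π) ^ (Fintype.card (Fin 2)) *
          (!![σx ^ 2, ρ; ρ, σy ^ 2] : Matrix (Fin 2) (Fin 2) ℝ).det))⁻¹ *
          Real.exp (-(x ⬝ᵥ ((!![σx ^ 2, ρ; ρ, σy ^ 2] : Matrix (Fin 2) (Fin 2) ℝ)⁻¹ *ᵥ x)) / 2)).toNNReal := by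
      apply Measurable.real_toNNReal
      apply Measurable.const_mul
      apply Real.measurable_exp.comp
      apply Measurable.div_const
      apply Measurable.neg
      simp only [hinv, dotProduct, Matrix.mulVec, Fin.sum_univ_two]
      fun_prop
    rw [show (fun x : Fin 2 → ℝ => ENNReal.ofReal
        ((Real.sqrt ((2 * π) ^ (Fintype.card (Fin 2)) *
          (!![σx ^ 2, ρ; ρ, σy ^ 2] : Matrix (Fin 2) (Fin 2) ℝ).det))⁻¹ *
          Real.exp (-(x ⬝ᵥ ((!![σx ^ 2, ρ; ρ, σy ^ 2] : Matrix (Fin 2) (Fin 2) ℝ)⁻¹ *ᵥ x)) / 2)))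
        = (fun x : Fin 2 → ℝ => (((Real.sqrt ((2 * π) ^ (Fintype.card (Fin 2)) *
          (!![σx ^ 2, ρ; ρ, σy ^ 2] : Matrix (Fin 2) (Fin 2) ℝ).det))⁻¹ *
          Real.exp (-(x ⬝ᵥ ((!![σx ^ 2, ρ; ρ, σy ^ 2] : Matrix (Fin 2) (Fin 2) ℝ)⁻¹ *ᵥ x)) / 2)).toNNReal : ℝ≥0∞))
        from rfl]
    rw [integral_withDensity_eq_integral_smul hmeas]
    refine integral_congr_ae (Filter.Eventually.of_forall fun x => ?_)
    dsimp only
    have h0 : (0:ℝ) ≤ (Real.sqrt ((2 * π) ^ (Fintype.card (Fin 2)) *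
        (!![σx ^ 2, ρ; ρ, σy ^ 2] : Matrix (Fin 2) (Fin 2) ℝ).det))⁻¹ *
        Real.exp (-(x ⬝ᵥ ((!![σx ^ 2, ρ; ρ, σy ^ 2] : Matrix (Fin 2) (Fin 2) ℝ)⁻¹ *ᵥ x)) / 2) := by
      positivity
    rw [NNReal.smul_def, Real.coe_toNNReal _ h0]
    rw [hquad x, hdet, Fintype.card_fin]
    rw [smul_eq_mul, mul_assoc, ← Real.exp_add]
    norm_num
    congr 1
    field_simp
    ring
    simp
  have step2 : ∫ x : Fin 2 → ℝ, (Real.sqrt ((2*π)^2*(σx^2*σy^2 - ρ^2)))⁻¹ *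
          Real.exp (-((σy^2 / (2*(σx^2*σy^2 - ρ^2)))*(x 0)^2)
            + (ρ/(σx^2*σy^2 - ρ^2) + s)*(x 0)*(x 1)
            - (σx^2 / (2*(σx^2*σy^2 - ρ^2)))*(x 1)^2)
      = ∫ z : ℝ × ℝ, (Real.sqrt ((2*π)^2*(σx^2*σy^2 - ρ^2)))⁻¹ *
          Real.exp (-((σy^2 / (2*(σx^2*σy^2 - ρ^2)))*z.1^2)
            + (ρ/(σx^2*σy^2 - ρ^2) + s)*z.1*z.2
            - (σx^2 / (2*(σx^2*σy^2 - ρ^2)))*z.2^2) := by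
    rw [← (volume_preserving_finTwoArrow ℝ).integral_comp
      (MeasurableEquiv.finTwoArrow).measurableEmbedding]
    rfl
  rw [step1, step2, integral_const_mul, gauss2 hppos hqpos hdisc]
  have hX : (σy^2 / (2*(σx^2*σy^2 - ρ^2)))*(σx^2 / (2*(σx^2*σy^2 - ρ^2)))
      - (ρ/(σx^2*σy^2 - ρ^2) + s)^2/4
      = (1 - 2*ρ*s - s^2*(σx^2*σy^2 - ρ^2))/(4*(σx^2*σy^2 - ρ^2)) := by
    obtain ⟨D, hD⟩ : ∃ D, σx^2*σy^2 - ρ^2 = D := ⟨_, rfl⟩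
    have e : σx^2*σy^2 = D + ρ^2 := by linarith
    rw [hD] at hDne ⊢
    field_simp
    linear_combination 4 * e
  rw [hX]
  rw [← Real.sqrt_inv]
  rw [show π / Real.sqrt ((1 - 2*ρ*s - s^2*(σx^2*σy^2 - ρ^2))/(4*(σx^2*σy^2 - ρ^2)))
      = Real.sqrt (π^2) / Real.sqrt ((1 - 2*ρ*s - s^2*(σx^2*σy^2 - ρ^2))/(4*(σx^2*σy^2 - ρ^2)))
      from by rw [Real.sqrt_sq Real.pi_nonneg]]
  rw [← Real.sqrt_div (sq_nonneg π), ← Real.sqrt_mul (inv_nonneg.2 hCpos.le)]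
  have heq1 : ((2*π)^2*(σx^2*σy^2 - ρ^2))⁻¹ *
      (π^2/((1 - 2*ρ*s - s^2*(σx^2*σy^2 - ρ^2))/(4*(σx^2*σy^2 - ρ^2))))
      = 1/(1 - 2*ρ*s - s^2*(σx^2*σy^2 - ρ^2)) := by
    rw [div_div_eq_mul_div, inv_mul_eq_div, div_div]
    rw [div_eq_div_iff (by positivity) hKne]
    ring
  rw [heq1]
  rw [one_div, Real.sqrt_inv, ← one_div]
end
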